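/- arXiv:math/0605149 — 10 statements merged into one kernel-verified Lean document; each statement's English description precedes it below -/
import Mathlib

section
/- Let A be an abelian topological group. A group homomorphism χ: A → T is continuous if and only if there exists a neighborhood U of 0 in A such that χ(U) ⊆ Λ₁, where Λ₁ is the image of [-1/4, 1/4] in T = R/Z. -/
open scoped Topology

noncomputable section

/-- The circle group `T = R/Z`. -/
abbrev Torus := AddCircle (1 : ℝ)

/-- `Λ₁`, the image of `[-1/4, 1/4]` in `T = R/Z`. -/
def Lam : Set Torus := (fun x : ℝ => (x : Torus)) '' Set.Icc (-(1/4)) (1/4)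

/-- The Pontryagin dual: continuous characters into `T = R/Z`, with the compact-open
topology (the topology on `ContinuousAddMonoidHom` is induced from `C(A, T)`). -/
abbrev PDual (A : Type*) [AddCommGroup A] [TopologicalSpace A] [IsTopologicalAddGroup A] :=
  ContinuousAddMonoidHom A Torus

/-- The polar `S^▷ = {χ ∈ Â : χ(S) ⊆ Λ₁}` of a subset `S ⊆ A`. -/
def polar {A : Type*} [AddCommGroup A] [TopologicalSpace A] [IsTopologicalAddGroup A]
    (S : Set A) : Set (PDual A) := {χ | ∀ s ∈ S, χ s ∈ Lam}

/-- The prepolar `Φ^◁ = {a ∈ A : χ(a) ∈ Λ₁ for all χ ∈ Φ}` of a set `Φ ⊆ Â`. -/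
def prepolar {A : Type*} [AddCommGroup A] [TopologicalSpace A] [IsTopologicalAddGroup A]
    (Φ : Set (PDual A)) : Set A := {a | ∀ χ ∈ Φ, χ a ∈ Lam}

/-- The evaluation homomorphism `α_A : A → Â̂`, `α_A(a)(χ) = χ(a)`. -/
def evalHom {A : Type*} [AddCommGroup A] [TopologicalSpace A] [IsTopologicalAddGroup A]
    (a : A) : PDual (PDual A) where
  toFun := fun χ => χ a
  map_zero' := rfl
  map_add' := fun _ _ => rfl
  continuous_toFun := continuous_eval_const a


variable {A : Type*} [AddCommGroup A] [TopologicalSpace A] [IsTopologicalAddGroup A]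

/-- If `k • x ∈ Λ₁` for all `1 ≤ k ≤ n`, then `x` lifts to a real with `|r| ≤ 1/(4n)`. -/
lemma exists_lift_of_smul_mem_lam :
    ∀ n : ℕ, 1 ≤ n → ∀ x : Torus, (∀ k ∈ Finset.Icc 1 n, k • x ∈ Lam) →
      ∃ r : ℝ, |r| ≤ 1 / (4 * n) ∧ (r : Torus) = x := by
  intro n
  induction n with
  | zero => omega
  | succ n ih =>
    intro _ x h
    rcases Nat.eq_zero_or_pos n with hn | hn
    · subst hn
      obtain ⟨s, hs, hse⟩ := h 1 (by simp)
      refine ⟨s, ?_, by simpa using hse⟩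
      rw [abs_le]; push_cast; constructor <;> [linarith [hs.1]; linarith [hs.2]]
    · obtain ⟨r, hr, hrx⟩ := ih hn x (fun k hk => h k (by
        simp only [Finset.mem_Icc] at hk ⊢; omega))
      obtain ⟨s, hs, hse⟩ := h (n + 1) (by simp)
      have hcast : ((n + 1 : ℕ) • x) = (((n + 1 : ℕ) * r : ℝ) : Torus) := by
        rw [← hrx, ← nsmul_eq_mul]
        exact (map_nsmul (QuotientAddGroup.mk' (AddSubgroup.zmultiples (1 : ℝ))) (n + 1) r).symm
      rw [hcast] at hse
      have hdiff : ∃ m : ℤ, ((n + 1 : ℕ) * r : ℝ) - s = m := by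
        have := (QuotientAddGroup.eq (s := AddSubgroup.zmultiples (1 : ℝ))).mp hse
        obtain ⟨m, hm⟩ := this
        have hm' : (m : ℝ) = -s + (n + 1 : ℕ) * r := by simpa using hm
        exact ⟨m, by linarith⟩
      obtain ⟨m, hm⟩ := hdiff
      have hnR : (1 : ℝ) ≤ (n : ℝ) := by exact_mod_cast hn
      have h4n : (0 : ℝ) < 4 * n := by positivity
      have hr2 : |r| * (4 * n) ≤ 1 := (le_div_iff₀ h4n).mp hr
      have hb1 : |((n + 1 : ℕ) : ℝ) * r| ≤ 1 / 2 := by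
        rw [abs_mul, abs_of_nonneg (by positivity : (0:ℝ) ≤ ((n + 1 : ℕ) : ℝ))]
        push_cast
        nlinarith [mul_nonneg (sub_nonneg.mpr hnR) (abs_nonneg r)]
      have hs' : |s| ≤ 1 / 4 := abs_le.mpr ⟨by linarith [hs.1], hs.2⟩
      have hm0 : m = 0 := by
        have : |(m : ℝ)| < 1 := by
          rw [← hm]
          calc |((n + 1 : ℕ) : ℝ) * r - s| ≤ |((n + 1 : ℕ) : ℝ) * r| + |s| := abs_sub _ _
            _ ≤ 1 / 2 + 1 / 4 := by gcongr
            _ < 1 := by norm_num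
        have h2 : |m| < 1 := by exact_mod_cast (by push_cast; exact this : ((|m| : ℤ) : ℝ) < 1)
        exact Int.abs_lt_one_iff.mp h2
      have heq : ((n + 1 : ℕ) : ℝ) * r = s := by rw [hm0] at hm; push_cast at hm ⊢; linarith
      refine ⟨r, ?_, hrx⟩
      have hpos : (0 : ℝ) < ((n + 1 : ℕ) : ℝ) := by positivity
      have habs : ((n + 1 : ℕ) : ℝ) * |r| ≤ 1 / 4 := by
        rw [← abs_of_nonneg hpos.le, ← abs_mul, heq]; exact hs'
      rw [le_div_iff₀ (by positivity)]
      nlinarith [abs_nonneg r]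

/-- A character `χ : A → T` is continuous if and only if there exists a neighborhood `U`
of `0` in `A` with `χ(U) ⊆ Λ₁`. -/
theorem continuous_iff_nhds_subset_lam (χ : A →+ Torus) :
    Continuous χ ↔ ∃ U ∈ 𝓝 (0 : A), ∀ a ∈ U, χ a ∈ Lam := by
  constructor
  · intro hχ
    have hLam : Lam ∈ 𝓝 (0 : Torus) := by
      rw [show (0 : Torus) = ((0 : ℝ) : Torus) from rfl, QuotientAddGroup.nhds_eq]
      exact Filter.mem_map.2 (Filter.mem_of_superset
        (Icc_mem_nhds (by norm_num) (by norm_num)) (fun r hr => ⟨r, hr, rfl⟩))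
    refine ⟨χ ⁻¹' Lam, ?_, fun a ha => ha⟩
    have := (hχ.continuousAt (x := (0 : A))).preimage_mem_nhds (by rwa [map_zero])
    exact this
  · rintro ⟨U, hU, hUL⟩
    apply continuous_of_continuousAt_zero χ
    rw [ContinuousAt, map_zero]
    intro W hW
    rw [show (0 : Torus) = ((0 : ℝ) : Torus) from rfl, QuotientAddGroup.nhds_eq,
      Filter.mem_map, Metric.mem_nhds_iff] at hW
    obtain ⟨ε, hε, hball⟩ := hW
    obtain ⟨n, hn⟩ := exists_nat_one_div_lt hε
    set N := n + 1 with hN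
    have hNε : 1 / (4 * (N : ℝ)) < ε := by
      refine lt_of_le_of_lt ?_ hn
      rw [hN]; push_cast
      apply div_le_div_of_nonneg_left (by norm_num) (by positivity)
      nlinarith [Nat.cast_nonneg (α := ℝ) n]
    have hV : {a : A | ∀ k ∈ Finset.Icc 1 N, k • a ∈ U} ∈ 𝓝 (0 : A) := by
      have : {a : A | ∀ k ∈ Finset.Icc 1 N, k • a ∈ U} =
          ⋂ k ∈ Finset.Icc 1 N, (fun a : A => k • a) ⁻¹' U := by
        ext a; simp
      rw [this]
      refine (Filter.biInter_mem (Finset.Icc 1 N).finite_toSet).2 fun k _ => ?_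
      exact (continuous_nsmul k).continuousAt.preimage_mem_nhds (by rwa [smul_zero])
    rw [Filter.mem_map]
    refine Filter.mem_of_superset hV fun a ha => ?_
    have hk : ∀ k ∈ Finset.Icc 1 N, k • χ a ∈ Lam := fun k hkk => by
      rw [← map_nsmul]; exact hUL _ (ha k hkk)
    obtain ⟨r, hr, hrx⟩ := exists_lift_of_smul_mem_lam N (by omega) (χ a) hk
    have : r ∈ Metric.ball (0 : ℝ) ε := by
      rw [Metric.mem_ball, Real.dist_eq, sub_zero]
      exact lt_of_le_of_lt hr hNε
    have := hball this
    simpa [hrx] using this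

end
end

section
/- Let A be an abelian topological group and U a neighborhood of 0 in A. Then the polar U^▷ = {χ ∈ Â : χ(U) ⊆ Λ₁} is a compact subset of the Pontryagin dual Â (with the compact-open topology). -/
open scoped Topology

noncomputable section

lemma lam_isClosed : IsClosed Lam := by
  have hc : Continuous (fun x : ℝ => (x : Torus)) := continuous_quotient_mk'
  exact (isCompact_Icc.image hc).isClosed

lemma abs_le_quarter {x : ℝ} (hx : |x| ≤ 1/2) (h : (x : Torus) ∈ Lam) : |x| ≤ 1/4 := by
  obtain ⟨y, hy, hyx⟩ := h
  have : ∃ m : ℤ, y - x = m := by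
    rw [QuotientAddGroup.eq_iff_sub_mem] at hyx
    obtain ⟨m, hm⟩ := AddSubgroup.mem_zmultiples_iff.mp hyx
    exact ⟨m, by simpa [zsmul_eq_mul] using hm.symm⟩
  obtain ⟨m, hm⟩ := this
  have hy' : |y| ≤ 1/4 := abs_le.mpr ⟨by linarith [hy.1], hy.2⟩
  have h1 : |(m:ℝ)| < 1 := by
    rw [← hm]
    calc |y - x| ≤ |y| + |x| := abs_sub _ _
    _ < 1 := by linarith [abs_le.mp hx, abs_le.mp hy']
  have h2 : |m| < 1 := by exact_mod_cast h1
  have hm0 : m = 0 := by rw [abs_lt] at h2; omega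
  have : y = x := by rw [hm0] at hm; push_cast at hm; linarith
  rw [← this]; exact hy'

lemma exists_lift (t : Torus) : ∃ x : ℝ, |x| ≤ 1/2 ∧ (x : Torus) = t := by
  obtain ⟨y, rfl⟩ := QuotientAddGroup.mk_surjective t
  refine ⟨y - round y, abs_sub_round y, ?_⟩
  rw [QuotientAddGroup.eq_iff_sub_mem]
  exact AddSubgroup.mem_zmultiples_iff.mpr ⟨-round y, by push_cast [zsmul_eq_mul]; ring⟩

lemma key_lemma (n : ℕ) (hn : 1 ≤ n) (t : Torus)
    (h : ∀ j : ℕ, 1 ≤ j → j ≤ n → j • t ∈ Lam) :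
    ∃ x : ℝ, |x| ≤ 1/(4*n) ∧ (x : Torus) = t := by
  obtain ⟨x, hx, rfl⟩ := exists_lift t
  suffices H : ∀ j : ℕ, 1 ≤ j → j ≤ n → |x| ≤ 1/(4*j) from ⟨x, H n hn le_rfl, rfl⟩
  intro j
  induction j with
  | zero => omega
  | succ k ih =>
    intro _ hkn
    have hcast : ∀ i : ℕ, ((i • x : ℝ) : Torus) = i • (x : Torus) := fun i =>
      by exact_mod_cast (QuotientAddGroup.mk' _).map_nsmul i x
    rcases Nat.eq_or_lt_of_le (Nat.one_le_iff_ne_zero.mpr (Nat.succ_ne_zero k)) with h1 | h1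
    · -- k = 0 : j = 1
      have hk0 : k = 0 := by omega
      subst hk0
      have := h 1 le_rfl hkn
      rw [← hcast 1] at this
      simpa using abs_le_quarter (by simpa using hx) (by simpa using this)
    · -- k ≥ 1
      have hk1 : 1 ≤ k := by omega
      have hxk : |x| ≤ 1/(4*k) := ih hk1 (by omega)
      have hb : |(k+1 : ℕ) • x| ≤ 1/2 := by
        rw [nsmul_eq_mul, abs_mul]
        push_cast
        have hk : (1:ℝ) ≤ k := by exact_mod_cast hk1
        have : |(k:ℝ)+1| = (k:ℝ)+1 := abs_of_nonneg (by linarith)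
        rw [this]
        calc ((k:ℝ)+1) * |x| ≤ ((k:ℝ)+1) * (1/(4*k)) := by
              apply mul_le_mul_of_nonneg_left hxk (by linarith)
        _ ≤ 1/2 := by
              rw [mul_one_div, div_le_div_iff₀ (by positivity) (by norm_num : (0:ℝ) < 2)]
              nlinarith
      have hmem : (((k+1 : ℕ) • x : ℝ) : Torus) ∈ Lam := by
        rw [hcast]; exact h (k+1) (by omega) hkn
      have := abs_le_quarter hb hmem
      rw [nsmul_eq_mul, abs_mul] at this
      push_cast at this
      have hk : (1:ℝ) ≤ k := by exact_mod_cast hk1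
      have habs : |(k:ℝ)+1| = (k:ℝ)+1 := abs_of_nonneg (by linarith)
      rw [habs] at this
      push_cast
      rw [le_div_iff₀ (by positivity)]
      nlinarith [abs_nonneg x]


variable {A : Type*} [AddCommGroup A] [TopologicalSpace A] [IsTopologicalAddGroup A]

lemma equicont_zero {U : Set A} (hU : U ∈ 𝓝 (0 : A)) {W : Set Torus} (hW : W ∈ 𝓝 (0 : Torus)) :
    ∃ V ∈ 𝓝 (0 : A), ∀ f : A →+ Torus, (∀ s ∈ U, f s ∈ Lam) → ∀ a ∈ V, f a ∈ W := by
  have hc : Continuous (fun x : ℝ => (x : Torus)) := continuous_quotient_mk'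
  have hpre : (fun x : ℝ => (x : Torus)) ⁻¹' W ∈ 𝓝 (0 : ℝ) := by
    have := hc.continuousAt (x := (0:ℝ))
    exact this (by simpa using hW)
  obtain ⟨ε, hε, hball⟩ := Metric.mem_nhds_iff.mp hpre
  obtain ⟨n, hn⟩ := exists_nat_gt (max (1/(4*ε)) 1)
  have hn1 : 1 ≤ n := by
    have := (le_max_right (1/(4*ε)) 1).trans_lt hn
    exact_mod_cast this.le
  have hnε : 1/(4*n) < ε := by
    have h1 : 1/(4*ε) < n := (le_max_left _ _).trans_lt hn
    have hnpos : (0:ℝ) < n := by positivity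
    rw [div_lt_iff₀ (by positivity)] at h1 ⊢
    nlinarith
  refine ⟨⋂ j ∈ Finset.Icc 1 n, (fun a : A => j • a) ⁻¹' U, ?_, ?_⟩
  · refine (Filter.biInter_finset_mem _).mpr fun j _ => ?_
    have hcont : Continuous (fun a : A => j • a) := by
      exact continuous_id.nsmul j
    exact hcont.continuousAt (x := (0:A)) (by rw [smul_zero]; exact hU)
  · intro f hf a ha
    simp only [Set.mem_iInter] at ha
    obtain ⟨x, hx, hxa⟩ := key_lemma n hn1 (f a) (fun j hj1 hjn => by
      rw [← map_nsmul]
      exact hf _ (ha j (Finset.mem_Icc.mpr ⟨hj1, hjn⟩)))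
    rw [← hxa]
    apply hball
    simp only [Metric.mem_ball, Real.dist_eq, sub_zero]
    exact lt_of_le_of_lt hx hnε

lemma cont_of_polar {U : Set A} (hU : U ∈ 𝓝 (0 : A)) (f : A →+ Torus)
    (hf : ∀ s ∈ U, f s ∈ Lam) : Continuous f := by
  apply continuous_of_continuousAt_zero f
  rw [ContinuousAt, map_zero, Filter.tendsto_def]
  intro W hW
  obtain ⟨V, hV, hVf⟩ := equicont_zero hU hW
  exact Filter.mem_of_superset hV (fun a ha => hVf f hf a ha)



/-- For a neighborhood `U` of `0` in `A`, the polar `U^▷` is compact in the Pontryagin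
dual `Â` with the compact-open topology. -/
theorem isCompact_polar_of_nhds {U : Set A} (hU : U ∈ 𝓝 (0 : A)) :
    IsCompact (polar U) := by
  rw [(ContinuousAddMonoidHom.isInducing_toContinuousMap A Torus).isCompact_iff]
  apply ArzelaAscoli.isCompact_of_equicontinuous
  · -- compactness of coeFn image
    have himg : (ContinuousMap.toFun '' (ContinuousAddMonoidHom.toContinuousMap '' polar U)) =
        {f : A → Torus | (∀ x y, f (x + y) = f x + f y) ∧ ∀ s ∈ U, f s ∈ Lam} := by
      ext f
      constructor
      · rintro ⟨g, ⟨χ, hχ, rfl⟩, rfl⟩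
        exact ⟨fun x y => map_add χ x y, hχ⟩
      · rintro ⟨hadd, hpol⟩
        have h0 : f 0 = 0 := by
          have := hadd 0 0; rw [add_zero] at this
          exact left_eq_add.mp this
        set g : A →+ Torus := { toFun := f, map_zero' := h0, map_add' := hadd }
        have hcont : Continuous g := cont_of_polar hU g hpol
        refine ⟨(⟨g, hcont⟩ : PDual A).toContinuousMap, ⟨⟨g, hcont⟩, hpol, rfl⟩, rfl⟩
    rw [himg]
    have hclosed : IsClosed {f : A → Torus | (∀ x y, f (x + y) = f x + f y) ∧ ∀ s ∈ U, f s ∈ Lam} := by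
      rw [Set.setOf_and]
      apply IsClosed.inter
      · simp only [Set.setOf_forall]
        exact isClosed_iInter fun x => isClosed_iInter fun y =>
          isClosed_eq (continuous_apply _) ((continuous_apply x).add (continuous_apply y))
      · simp only [Set.setOf_forall]
        exact isClosed_iInter fun s => isClosed_iInter fun _ =>
          lam_isClosed.preimage (continuous_apply s)
    exact hclosed.isCompact
  · -- equicontinuity
    intro x₀ E hE
    rw [uniformity_eq_comap_nhds_zero Torus] at hE
    obtain ⟨W, hW, hWE⟩ := hE
    obtain ⟨V, hV, hVf⟩ := equicont_zero hU hW
    have hmem : {x : A | x - x₀ ∈ V} ∈ 𝓝 x₀ := by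
      have h : Filter.Tendsto (fun x : A => x - x₀) (𝓝 x₀) (𝓝 (x₀ - x₀)) :=
        (continuous_id.sub continuous_const).tendsto x₀
      rw [sub_self] at h
      exact h hV
    filter_upwards [hmem] with x hx i
    obtain ⟨χ, hχ, hi⟩ := i.2
    apply hWE
    have h2 : χ (x - x₀) ∈ W := hVf χ.toAddMonoidHom hχ _ hx
    rw [map_sub] at h2
    show (i : C(A, Torus)) x - (i : C(A, Torus)) x₀ ∈ W
    rw [← hi]
    exact h2


end
end

section
/- Let A be an abelian topological group. The evaluation homomorphism α_A : A → Â̂, α_A(a)(χ) = χ(a), is continuous if and only if every compact subset of Â is equicontinuous. -/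
open scoped Topology

noncomputable section

variable {A : Type*} [AddCommGroup A] [TopologicalSpace A] [IsTopologicalAddGroup A]

/-- The evaluation homomorphism `α_A : A → Â̂` is continuous if and only if every compact
subset of `Â` is equicontinuous. -/
theorem evalHom_continuous_iff_compact_equicontinuous :
    Continuous (evalHom : A → PDual (PDual A)) ↔
      ∀ Sig : Set (PDual A), IsCompact Sig →
        ∀ W ∈ 𝓝 (0 : Torus), ∃ V ∈ 𝓝 (0 : A), ∀ χ ∈ Sig, ∀ a ∈ V, χ a ∈ W := by

  constructor
  · -- continuity implies equicontinuity of compacts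
    intro hc Sig hSig W hW
    obtain ⟨W', hW'sub, hW'open, hW'0⟩ := mem_nhds_iff.mp hW
    set U : Set C(PDual A, Torus) := {f | Set.MapsTo f Sig W'} with hU
    have hUopen : IsOpen U := ContinuousMap.isOpen_setOf_mapsTo hSig hW'open
    have hcont : Continuous fun a : A =>
        (ContinuousAddMonoidHom.toContinuousMap (evalHom a) : C(PDual A, Torus)) :=
      ((ContinuousAddMonoidHom.isInducing_toContinuousMap _ _).continuous).comp hc
    refine ⟨(fun a : A =>
        (ContinuousAddMonoidHom.toContinuousMap (evalHom a) : C(PDual A, Torus))) ⁻¹' U,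
      (hUopen.preimage hcont).mem_nhds ?_, ?_⟩
    · intro χ hχ
      have h0 : (evalHom (0 : A)) χ = 0 := map_zero χ
      show (evalHom (0 : A)) χ ∈ W'
      rw [h0]; exact hW'0
    · intro χ hχ a ha
      exact hW'sub (ha hχ)
  · -- equicontinuity of compacts implies continuity
    intro h
    rw [(ContinuousAddMonoidHom.isInducing_toContinuousMap _ _).continuous_iff]
    rw [continuous_iff_continuousAt]
    intro b
    rw [ContinuousAt, ContinuousMap.tendsto_iff_forall_isCompact_tendstoUniformlyOn]
    intro K hK u hu
    rw [uniformity_eq_comap_nhds_zero Torus] at hu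
    obtain ⟨W, hW, hWsub⟩ := hu
    obtain ⟨V, hV, hVprop⟩ := h K hK W hW
    have hbV : (fun a => b + a) '' V ∈ 𝓝 b := by
      have : (fun a => b + a) '' V = (fun a => -b + a) ⁻¹' V := by
        ext x
        simp [Set.mem_image, eq_comm]
      rw [this]
      exact (continuous_const.add continuous_id).continuousAt.preimage_mem_nhds (by simpa using hV)
    filter_upwards [hbV] with a ha χ hχ
    obtain ⟨v, hv, rfl⟩ := ha
    have : χ (b + v) - χ b ∈ W := by
      simpa [map_add] using hVprop χ hχ v hv
    exact hWsub this

end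
end

section
/- Let A be a Hausdorff abelian topological group. The evaluation homomorphism α_A : A → Â̂ is k-continuous: the restriction of α_A to every compact subset K of A is continuous. -/
open scoped Topology

noncomputable section

variable {A : Type*} [AddCommGroup A] [TopologicalSpace A] [IsTopologicalAddGroup A]

/-- For a Hausdorff abelian topological group `A`, the evaluation homomorphism
`α_A : A → Â̂` is k-continuous: its restriction to every compact subset is continuous. -/
theorem evalHom_kContinuous [T2Space A] :
    ∀ K : Set A, IsCompact K →
      Continuous (fun x : K => evalHom (x : A) : K → PDual (PDual A)) := by
  intro K hK
  have : CompactSpace K := isCompact_iff_compactSpace.mp hK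
  -- the restriction map `Â → C(K, T)` is continuous
  have hr : Continuous (fun χ : PDual A => (χ.toContinuousMap).restrict K) :=
    (ContinuousMap.continuous_restrict K).comp
      (ContinuousAddMonoidHom.isInducing_toContinuousMap A Torus).continuous
  apply (ContinuousAddMonoidHom.isInducing_toContinuousMap (PDual A) Torus).continuous_iff.mpr
  apply ContinuousMap.continuous_of_continuous_uncurry
  -- evaluation `C(K, T) × K → T` is continuous since `K` is compact Hausdorff
  exact ContinuousEval.continuous_eval.comp ((hr.comp continuous_snd).prodMk continuous_fst)

end
end

section
/- For every abelian topological group A, the Pontryagin dual Â is locally quasi-convex: the sets K^▷ for K compact in A form a neighborhood base at 0 of Â consisting of quasi-convex sets, i.e., sets S with S = S^▷◁. -/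
open scoped Topology

noncomputable section

variable {A : Type*} [AddCommGroup A] [TopologicalSpace A] [IsTopologicalAddGroup A]

open scoped Uniformity

/-- Every element of the torus has a representative `s` with `|s| = ‖x‖ ≤ 1/2`. -/
lemma exists_rep (x : Torus) : ∃ s : ℝ, (s : Torus) = x ∧ |s| = ‖x‖ ∧ |s| ≤ 1/2 := by
  obtain ⟨r, rfl⟩ := QuotientAddGroup.mk_surjective x
  have hr : (QuotientAddGroup.mk r : Torus) = (r : Torus) := rfl
  rw [hr]
  have hnorm : ‖(r : Torus)‖ = |r - round r| := by
    rw [AddCircle.norm_eq]; simp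
  refine ⟨r - round r, ?_, ?_, ?_⟩
  · have h0 : ((round r : ℝ) : Torus) = 0 :=
      (AddCircle.coe_eq_zero_iff _).mpr ⟨round r, by simp⟩
    rw [AddCircle.coe_sub, h0, sub_zero]
  · rw [hnorm]
  · exact abs_sub_round r

lemma mem_Lam_iff (x : Torus) : x ∈ Lam ↔ ‖x‖ ≤ 1/4 := by
  constructor
  · rintro ⟨r, hr, rfl⟩
    have habs : |r| ≤ 1/4 := abs_le.mpr ⟨by linarith [hr.1], hr.2⟩
    have : ‖(r : Torus)‖ = |r| := by
      rw [AddCircle.norm_coe_eq_abs_iff (p := (1:ℝ)) one_ne_zero]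
      rw [abs_one]; linarith
    rw [this]; exact habs
  · intro h
    obtain ⟨s, rfl, hs, _⟩ := exists_rep x
    exact ⟨s, abs_le.mp (hs ▸ h) |>.imp (fun h => by linarith) id, rfl⟩

lemma norm_le_of_nsmul (t : Torus) (n : ℕ)
    (h : ∀ k : ℕ, 1 ≤ k → k ≤ n + 1 → ‖(k • t : Torus)‖ ≤ 1/4) :
    ‖t‖ ≤ 1 / (4 * (n + 1)) := by
  obtain ⟨s, rfl, hs, hs2⟩ := exists_rep t
  rw [← hs]
  have key : ∀ k : ℕ, k ≤ n → |s| ≤ 1 / (4 * (k + 1)) := by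
    intro k
    induction k with
    | zero =>
      intro _
      have h1 := h 1 le_rfl (by omega)
      rw [one_smul, ← hs] at h1
      simpa using h1
    | succ k ih =>
      intro hk1
      have ihs : |s| ≤ 1 / (4 * (k + 1)) := ih (by omega)
      have hk0 : (0:ℝ) < (k:ℝ) + 1 := by positivity
      -- |(k+2) * s| ≤ 1/2
      have habs : |((k:ℝ) + 2) * s| ≤ 1/2 := by
        rw [abs_mul, abs_of_pos (by positivity : (0:ℝ) < (k:ℝ)+2)]
        have : ((k:ℝ)+2) * |s| ≤ ((k:ℝ)+2) * (1 / (4 * (k+1))) := by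
          apply mul_le_mul_of_nonneg_left ihs (by positivity)
        have h2 : ((k:ℝ)+2) * (1 / (4 * (k+1))) ≤ 1/2 := by
          rw [mul_one_div, div_le_div_iff₀ (by positivity) (by norm_num)]
          nlinarith [hk0]
        linarith
      have hcoe : ((k+2) • ((s : ℝ) : Torus)) = ((((k:ℝ)+2) * s : ℝ) : Torus) := by
        rw [← AddCircle.coe_nsmul]
        norm_num [nsmul_eq_mul]
      have hnorm : ‖((k+2) • ((s:ℝ) : Torus))‖ = |((k:ℝ)+2) * s| := by
        rw [hcoe, AddCircle.norm_coe_eq_abs_iff (p := (1:ℝ)) one_ne_zero, abs_one]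
        linarith
      have hle := h (k+2) (by omega) (by omega)
      push_cast at hnorm
      rw [hnorm] at hle
      rw [abs_mul, abs_of_pos (by positivity : (0:ℝ) < (k:ℝ)+2)] at hle
      rw [le_div_iff₀ (by positivity)]
      push_cast
      nlinarith [abs_nonneg s]
  have := key n le_rfl
  convert this using 2

/-- The Pontryagin dual `Â` is locally quasi-convex: the polars `K^▷` of compact sets
`K ⊆ A` form a neighborhood base at `0` of `Â` consisting of quasi-convex sets. -/
theorem dual_locallyQuasiConvex :
    (𝓝 (0 : PDual A)).HasBasis (fun K : Set A => IsCompact K) (fun K => polar K) ∧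
    ∀ K : Set A, IsCompact K → prepolar (polar (polar K)) = polar K := by
  constructor
  · -- neighborhood basis
    have h1 := (Metric.uniformity_basis_dist (α := Torus)).compactConvergenceUniformity (α := A)
    have h2 : 𝓝 (0 : C(A, Torus)) = Filter.comap (Prod.mk (0 : C(A, Torus))) (𝓤 C(A, Torus)) :=
      nhds_eq_comap_uniformity
    have h3 := h1.comap (Prod.mk (0 : C(A, Torus)))
    rw [← h2] at h3
    have hcm : 𝓝 (0 : PDual A) =
        Filter.comap ContinuousAddMonoidHom.toContinuousMap (𝓝 (0 : C(A, Torus))) :=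
      (ContinuousAddMonoidHom.isInducing_toContinuousMap A Torus).nhds_eq_comap 0
    have h4 := h3.comap (ContinuousAddMonoidHom.toContinuousMap : PDual A → C(A, Torus))
    rw [← hcm] at h4
    refine h4.to_hasBasis ?_ ?_
    · rintro ⟨K, ε⟩ ⟨hK, hε⟩
      obtain ⟨n, hn⟩ : ∃ n : ℕ, 1 / (4 * ((n : ℝ) + 1)) < ε := by
        obtain ⟨n, hn⟩ := exists_nat_gt (1 / (4 * ε))
        refine ⟨n, ?_⟩
        rw [div_lt_iff₀ (by positivity)] at hn ⊢
        have : (0:ℝ) < (n:ℝ) + 1 := by positivity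
        nlinarith
      refine ⟨⋃ k ∈ Finset.Icc 1 (n + 1), (fun x : A => k • x) '' K, ?_, ?_⟩
      · exact (Finset.Icc 1 (n+1)).isCompact_biUnion fun k _ => hK.image (continuous_nsmul k)
      · intro χ hχ
        simp only [Set.mem_preimage, Set.mem_setOf_eq]
        intro x hx
        have hb : ∀ k : ℕ, 1 ≤ k → k ≤ n + 1 → ‖(k • (χ x) : Torus)‖ ≤ 1/4 := by
          intro k hk1 hk2
          have hmem : k • x ∈ ⋃ k ∈ Finset.Icc 1 (n + 1), (fun x : A => k • x) '' K :=
            Set.mem_biUnion (Finset.mem_Icc.mpr ⟨hk1, hk2⟩) ⟨x, hx, rfl⟩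
          have := hχ _ hmem
          rw [map_nsmul] at this
          exact (mem_Lam_iff _).mp this
        have := norm_le_of_nsmul (χ x) n hb
        have hlt : ‖χ x‖ < ε := lt_of_le_of_lt this hn
        calc dist ((0 : C(A, Torus)) x) ((χ : C(A, Torus)) x)
            = ‖(χ : C(A, Torus)) x‖ := by
              simp [dist_eq_norm]
          _ < ε := hlt
    · intro K hK
      refine ⟨⟨K, 1/4⟩, ⟨hK, by norm_num⟩, ?_⟩
      intro χ hχ
      intro s hs
      rw [mem_Lam_iff]
      have h := hχ s hs
      simp only [Set.mem_setOf_eq, ContinuousMap.zero_apply, dist_eq_norm, zero_sub, norm_neg] at h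
      exact le_of_lt h
  · -- quasi-convexity of polars
    intro K _
    ext χ
    constructor
    · intro hχ a ha
      have hmem : evalHom a ∈ polar (polar K) := by
        intro χ' hχ'
        exact hχ' a ha
      exact hχ (evalHom a) hmem
    · intro hχ ξ hξ
      exact hξ χ hχ


end
end

section
/- Let A be a locally quasi-convex Hausdorff abelian topological group. Then the evaluation homomorphism α_A : A → Â̂ is injective. -/
open scoped Topology

noncomputable section

variable {A : Type*} [AddCommGroup A] [TopologicalSpace A] [IsTopologicalAddGroup A]

/-- If `A` is a locally quasi-convex Hausdorff abelian topological group, then the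
evaluation homomorphism `α_A : A → Â̂` is injective. -/
theorem evalHom_injective_of_lqc [T2Space A]
    (hlqc : (𝓝 (0 : A)).HasBasis (fun U : Set A => U ∈ 𝓝 (0 : A))
      (fun U => prepolar (polar U))) :
    Function.Injective (evalHom : A → PDual (PDual A)) := by
  intro a b hab
  have hchi : ∀ χ : PDual A, χ a = χ b := fun χ =>
    congrArg (fun f : PDual (PDual A) => f χ) hab
  set c := a - b with hc
  have hc0 : ∀ χ : PDual A, χ c = 0 := by
    intro χ
    simp [hc, map_sub, hchi χ]
  have h0Lam : (0 : Torus) ∈ Lam := ⟨0, by norm_num, by norm_num⟩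
  have hmem : ∀ V ∈ 𝓝 (0 : A), c ∈ V := by
    intro V hV
    rcases (hlqc.mem_iff.mp hV) with ⟨U, _, hUV⟩
    exact hUV (fun χ _ => by rw [hc0 χ]; exact h0Lam)
  have h0cl : (0 : A) ∈ closure {c} :=
    mem_closure_iff_nhds.mpr fun V hV => ⟨c, hmem V hV, rfl⟩
  rw [closure_singleton] at h0cl
  have : c = 0 := (Set.mem_singleton_iff.mp h0cl).symm
  exact sub_eq_zero.mp this

end
end

section
/- Let A be an abelian topological group with a dense subgroup D. If D is locally quasi-convex, then A is locally quasi-convex. In particular, the completion of a locally quasi-convex group is locally quasi-convex. -/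
open scoped Topology

noncomputable section

set_option maxHeartbeats 1000000

/-! ### Auxiliary lemmas -/

/-- `Λ_{1/8}`, the image of `[-1/8, 1/8]` in `T`. -/
def Lam8 : Set Torus := (fun x : ℝ => (x : Torus)) '' Set.Icc (-(1/8)) (1/8)

lemma mem_lam {x : ℝ} (hx : x ∈ Set.Icc (-(1/4) : ℝ) (1/4)) : (x : Torus) ∈ Lam :=
  ⟨x, hx, rfl⟩

lemma mem_lam8 {x : ℝ} (hx : x ∈ Set.Icc (-(1/8) : ℝ) (1/8)) : (x : Torus) ∈ Lam8 :=
  ⟨x, hx, rfl⟩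

lemma lam8_add_lam8 {s t : Torus} (hs : s ∈ Lam8) (ht : t ∈ Lam8) : s + t ∈ Lam := by
  obtain ⟨x, hx, rfl⟩ := hs
  obtain ⟨y, hy, rfl⟩ := ht
  show ((x : Torus) + (y : Torus)) ∈ Lam
  rw [← AddCircle.coe_add]
  refine mem_lam ⟨?_, ?_⟩
  · have := hx.1; have := hy.1; norm_num at *; linarith
  · have := hx.2; have := hy.2; norm_num at *; linarith

lemma lam_double {t : Torus} (h1 : t ∈ Lam) (h2 : t + t ∈ Lam) : t ∈ Lam8 := by
  obtain ⟨x, hx, rfl⟩ := h1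
  obtain ⟨y, hy, hxy⟩ := h2
  change (y : Torus) = (x : Torus) + (x : Torus) at hxy
  have hzero : ((x + x - y : ℝ) : Torus) = 0 := by
    rw [AddCircle.coe_sub, AddCircle.coe_add, ← hxy, sub_self]
  obtain ⟨n, hn⟩ := (AddCircle.coe_eq_zero_iff 1).1 hzero
  have hn' : (n : ℝ) = x + x - y := by simpa using hn
  have hx1 := hx.1; have hx2 := hx.2; have hy1 := hy.1; have hy2 := hy.2
  norm_num at hx1 hx2 hy1 hy2
  have hn0 : n = 0 := by
    have h1 : (n : ℝ) < 1 := by rw [hn']; linarith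
    have h2 : (-1 : ℝ) < n := by rw [hn']; linarith
    have h1' : n < 1 := by exact_mod_cast h1
    have h2' : -1 < n := by exact_mod_cast h2
    omega
  rw [hn0] at hn'
  norm_num at hn'
  show (x : Torus) ∈ Lam8
  refine mem_lam8 ⟨?_, ?_⟩ <;> norm_num <;> linarith

variable {A : Type*} [AddCommGroup A] [TopologicalSpace A] [IsTopologicalAddGroup A]

/-- Every continuous character of a dense subgroup extends to the whole group. -/
lemma exists_char_extension (D : AddSubgroup A) (hD : Dense (D : Set A)) (ψ : PDual D) :
    ∃ χ : PDual A, ∀ d : D, χ (d : A) = ψ d := by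
  letI : UniformSpace A := IsTopologicalAddGroup.rightUniformSpace A
  haveI : IsUniformAddGroup A := isUniformAddGroup_of_addCommGroup
  have hui : IsUniformInducing ((↑) : D → A) := isUniformEmbedding_subtype_val.isUniformInducing
  have hdr : DenseRange ((↑) : D → A) := hD.denseRange_val
  have hdi : IsDenseInducing ((↑) : D → A) := hui.isDenseInducing hdr
  have hψc : Continuous (⇑ψ) := map_continuous ψ
  have hψu : UniformContinuous (⇑ψ) := uniformContinuous_of_continuousAt_zero ψ hψc.continuousAt
  set g : A → Torus := hdi.extend ⇑ψ with hgdef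
  have hgc : Continuous g := (uniformContinuous_uniformly_extend hui hdr hψu).continuous
  have hge : ∀ d : D, g (d : A) = ψ d := fun d => hdi.extend_eq hψc d
  have hadd : ∀ x y : A, g (x + y) = g x + g y := by
    have hcl : IsClosed {p : A × A | g (p.1 + p.2) = g p.1 + g p.2} :=
      isClosed_eq (hgc.comp continuous_add)
        ((hgc.comp continuous_fst).add (hgc.comp continuous_snd))
    have hsub : (D : Set A) ×ˢ (D : Set A) ⊆ {p : A × A | g (p.1 + p.2) = g p.1 + g p.2} := by
      rintro ⟨x, y⟩ ⟨hx, hy⟩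
      have h1 := hge (⟨x, hx⟩ + ⟨y, hy⟩)
      have h2 := hge ⟨x, hx⟩
      have h3 := hge ⟨y, hy⟩
      simp only [AddSubgroup.coe_add, map_add] at h1
      show g (x + y) = g x + g y
      rw [h1, h2, h3]
    intro x y
    have hcls : closure ((D : Set A) ×ˢ (D : Set A)) ⊆
        {p : A × A | g (p.1 + p.2) = g p.1 + g p.2} := closure_minimal hsub hcl
    have hmem : ((x, y) : A × A) ∈ closure ((D : Set A) ×ˢ (D : Set A)) := by
      rw [(hD.prod hD).closure_eq]; trivial
    exact hcls hmem
  refine ⟨{ toFun := g, map_zero' := ?_, map_add' := hadd, continuous_toFun := hgc }, hge⟩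
  have h0 := hge 0
  simpa using h0

/-- If a dense subgroup `D` of `A` is locally quasi-convex (with the subspace topology),
then `A` is locally quasi-convex. -/
theorem locallyQuasiConvex_of_dense_subgroup (D : AddSubgroup A) (hD : Dense (D : Set A))
    (hlqc : (𝓝 (0 : D)).HasBasis (fun U : Set D => U ∈ 𝓝 (0 : D))
      (fun U => prepolar (polar U))) :
    (𝓝 (0 : A)).HasBasis (fun U : Set A => U ∈ 𝓝 (0 : A))
      (fun U => prepolar (polar U)) := by
  constructor
  intro V
  constructor
  · intro hV
    obtain ⟨C, hCmem, hCclosed, hCV⟩ := exists_mem_nhds_isClosed_subset hV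
    have hCD : (Subtype.val ⁻¹' C : Set D) ∈ 𝓝 (0 : D) :=
      continuous_subtype_val.continuousAt.preimage_mem_nhds hCmem
    obtain ⟨U, hU, hUsub⟩ := hlqc.mem_iff.1 hCD
    -- extract an open neighborhood Ũ of 0 in A with Ũ ∩ D ⊆ U
    rw [nhds_subtype] at hU
    obtain ⟨t, ht, htU⟩ := Filter.mem_comap.1 hU
    obtain ⟨Ub, hUbt, hUbopen, hUb0⟩ := mem_nhds_iff.1 ht
    set U₂ : Set A := Ub ∩ (fun x : A => x + x) ⁻¹' Ub with hU₂def
    have hU₂open : IsOpen U₂ :=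
      hUbopen.inter (hUbopen.preimage (continuous_id.add continuous_id))
    have hU₂0 : (0 : A) ∈ U₂ := ⟨hUb0, by simpa using hUb0⟩
    refine ⟨U₂, hU₂open.mem_nhds hU₂0, ?_⟩
    intro a ha
    -- main claim: a is in the closure of the image of the bipolar of U in D
    have key : a ∈ closure (Subtype.val '' (prepolar (polar U))) := by
      rw [mem_closure_iff]
      intro O hOopen haO
      have hO'open : IsOpen (O ∩ {x : A | x - a ∈ U₂}) :=
        hOopen.inter (hU₂open.preimage (continuous_id.sub continuous_const))
      have haO' : a ∈ O ∩ {x : A | x - a ∈ U₂} := ⟨haO, by simpa using hU₂0⟩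
      obtain ⟨x, hxD, hxO'⟩ := hD.exists_mem_open hO'open ⟨a, haO'⟩
      have hxD' : x ∈ D := hxD
      refine ⟨x, hxO'.1, ⟨x, hxD'⟩, ?_, rfl⟩
      -- show ⟨x, hxD'⟩ ∈ prepolar (polar U)
      intro ψ hψ
      obtain ⟨χ, hχ⟩ := exists_char_extension D hD ψ
      -- χ maps Ub into Lam
      have hχUb : ∀ y ∈ Ub, χ y ∈ Lam := by
        intro y hy
        have hy' : y ∈ closure (Ub ∩ (D : Set A)) := hD.open_subset_closure_inter hUbopen hy
        have himg : χ y ∈ closure (χ '' (Ub ∩ (D : Set A))) :=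
          image_closure_subset_closure_image (map_continuous χ) ⟨y, hy', rfl⟩
        have hsub : χ '' (Ub ∩ (D : Set A)) ⊆ Lam := by
          rintro _ ⟨z, ⟨hzUb, hzD⟩, rfl⟩
          have hzU : (⟨z, hzD⟩ : D) ∈ U := htU (hUbt hzUb)
          rw [hχ ⟨z, hzD⟩]
          exact hψ _ hzU
        exact lam_isClosed.closure_subset_iff.2 hsub himg
      -- the doubled character
      set χ₂ : PDual A :=
        { toFun := fun z => χ z + χ z
          map_zero' := by simp
          map_add' := fun u v => by
            simp only [map_add]; exact add_add_add_comm _ _ _ _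
          continuous_toFun := (map_continuous χ).add (map_continuous χ) } with hχ₂def
      have hχpol : χ ∈ polar U₂ := fun s hs => hχUb s hs.1
      have hχ₂pol : χ₂ ∈ polar U₂ := by
        intro s hs
        show χ s + χ s ∈ Lam
        rw [← map_add]
        exact hχUb _ hs.2
      have hχa : χ a ∈ Lam8 := lam_double (ha χ hχpol) (ha χ₂ hχ₂pol)
      have hw : x - a ∈ U₂ := hxO'.2
      have hχw : χ (x - a) ∈ Lam8 := by
        refine lam_double (hχUb _ hw.1) ?_
        rw [← map_add]
        exact hχUb _ hw.2
      have hx' : χ x ∈ Lam := by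
        have hxe : a + (x - a) = x := by abel
        have heq : χ x = χ a + χ (x - a) := by rw [← map_add, hxe]
        rw [heq]
        exact lam8_add_lam8 hχa hχw
      rw [← hχ ⟨x, hxD'⟩]
      exact hx'
    have hMC : Subtype.val '' (prepolar (polar U)) ⊆ C := by
      rintro _ ⟨d, hd, rfl⟩
      exact hUsub hd
    exact hCV (hCclosed.closure_subset_iff.2 hMC key)
  · rintro ⟨U, hU, hsub⟩
    exact Filter.mem_of_superset
      (Filter.mem_of_superset hU
        (show U ⊆ prepolar (polar U) from fun a haU χ hχ => hχ a haU)) hsub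

end
end

section
/- Let A be a metrizable abelian topological group. Then the double dual Â̂ is complete and metrizable, and both evaluation maps α_A : A → Â̂ and α_{Â} : Â → Â̂̂ are continuous. -/
open scoped Topology

noncomputable section

open Filter Set

namespace DD

def Ball (ε : ℝ) : Set Torus := (fun x : ℝ => (x : Torus)) '' Set.Icc (-ε) ε

lemma lam_eq_ball : Lam = Ball (1/4) := rfl

lemma coe_eq_coe_iff {x y : ℝ} : (x : Torus) = (y : Torus) ↔ ∃ k : ℤ, x - y = k := by
  rw [QuotientAddGroup.eq_iff_sub_mem]
  constructor
  · intro h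
    rw [AddSubgroup.mem_zmultiples_iff] at h
    obtain ⟨k, hk⟩ := h
    exact ⟨k, by simpa using hk.symm⟩
  · rintro ⟨k, hk⟩
    rw [AddSubgroup.mem_zmultiples_iff]
    exact ⟨k, by simp [hk]⟩

lemma mem_ball {ε : ℝ} {x : ℝ} (hx : |x| ≤ ε) : (x : Torus) ∈ Ball ε :=
  ⟨x, abs_le.mp hx, rfl⟩

lemma eq_of_coe_eq_coe {x y : ℝ} (h : (x : Torus) = (y : Torus)) (hd : |x - y| < 1) : x = y := by
  obtain ⟨k, hk⟩ := coe_eq_coe_iff.mp h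
  have hk1 : |(k : ℝ)| < 1 := hk ▸ hd
  have : |k| < 1 := by exact_mod_cast hk1
  have h2 := abs_lt.mp this
  have : k = 0 := by omega
  rw [this] at hk
  push_cast at hk
  linarith

lemma notin_lam {x : ℝ} (h1 : 1/4 < |x|) (h2 : |x| ≤ 1/2) : (x : Torus) ∉ Lam := by
  rintro ⟨y, hy, hxy⟩
  rw [Set.mem_Icc] at hy
  have hay : |y| ≤ 1/4 := abs_le.mpr hy
  have habs : |y - x| < 1 := by
    calc |y - x| ≤ |y| + |x| := abs_sub y x
    _ ≤ 1/4 + 1/2 := add_le_add hay h2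
    _ < 1 := by norm_num
  have := eq_of_coe_eq_coe (hxy : (y : Torus) = (x : Torus)) habs
  rw [this] at hay
  linarith [h1.trans_le hay]

lemma mem_lam_iff {x : ℝ} (hx : |x| ≤ 1/2) : (x : Torus) ∈ Lam ↔ |x| ≤ 1/4 := by
  constructor
  · intro h
    by_contra hc
    exact notin_lam (lt_of_not_ge hc) hx h
  · intro h
    exact ⟨x, abs_le.mp h, rfl⟩

/-- The key arithmetic fact: if `t, 2t, ..., mt` all lie in `Λ₁`, then `t` lies in the image
of `[-1/(4m), 1/(4m)]`. -/
lemma mem_ball_of_nsmul_mem_lam {t : Torus} {m : ℕ} (hm : 0 < m)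
    (h : ∀ j : ℕ, 1 ≤ j → j ≤ m → (j : ℕ) • t ∈ Lam) : t ∈ Ball (1/(4*m)) := by
  obtain ⟨x, hx, rfl⟩ : t ∈ Lam := by simpa using h 1 le_rfl hm
  rw [Set.mem_Icc] at hx
  have hx4 : |x| ≤ 1/4 := abs_le.mpr hx
  refine mem_ball ?_
  by_contra hc
  push_neg at hc
  have hxpos : 0 < |x| := lt_of_le_of_lt (by positivity) hc
  -- P j : 1/4 < j * |x|
  have hPm : 1/4 < (m : ℝ) * |x| := by
    have h4m : 0 < 4*(m:ℝ) := by positivity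
    rw [div_lt_iff₀ h4m] at hc
    calc (1:ℝ)/4 = (1 * (1/4) : ℝ) := by ring
    _ < |x| * (4*m) * (1/4) := by nlinarith
    _ = m * |x| := by ring
  classical
  have hex : ∃ j : ℕ, 1/4 < (j : ℝ) * |x| := ⟨m, hPm⟩
  set j := Nat.find hex with hj
  have hPj : 1/4 < (j : ℝ) * |x| := Nat.find_spec hex
  have hjm : j ≤ m := Nat.find_le hPm
  have hj1 : 1 ≤ j := by
    rcases Nat.eq_zero_or_pos j with h0 | h; swap; · exact h
    rw [h0] at hPj; norm_num at hPj
  have hj2 : 2 ≤ j := by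
    rcases Nat.lt_or_ge j 2 with h' | h'; swap; · exact h'
    have hj1' : j = 1 := by omega
    rw [hj1'] at hPj
    norm_num at hPj
    linarith
  have hprev : (↑(j-1) : ℝ) * |x| ≤ 1/4 := le_of_not_gt (Nat.find_min hex (by omega))
  have hcast : ((j-1 : ℕ) : ℝ) = (j : ℝ) - 1 := by
    have : (1:ℕ) ≤ j := hj1
    push_cast [this]; ring
  have hhalf : (j : ℝ) * |x| ≤ 1/2 := by
    rw [hcast] at hprev
    nlinarith
  have : ((j : ℝ) * x : ℝ) = (j:ℕ) • x := by push_cast [nsmul_eq_mul]; ring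
  have hsm : ((j:ℕ) • x : ℝ) = (j : ℝ) * x := by push_cast [nsmul_eq_mul]; ring
  have hmem := h j hj1 hjm
  rw [← AddCircle.coe_nsmul] at hmem
  rw [hsm] at hmem
  have habs : |(j:ℝ) * x| = (j:ℝ) * |x| := by
    rw [abs_mul, abs_of_nonneg (by positivity : (0:ℝ) ≤ (j:ℝ))]
  exact notin_lam (by rw [habs]; exact hPj) (by rw [habs]; exact hhalf) hmem

lemma coe_continuous : Continuous (fun x : ℝ => (x : Torus)) := AddCircle.continuous_mk' 1

lemma ball_small {V : Set Torus} (hV : V ∈ 𝓝 (0 : Torus)) :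
    ∃ m : ℕ, 0 < m ∧ Ball (1/(4*m)) ⊆ V := by
  have h0 : ((0:ℝ) : Torus) = 0 := by norm_num
  have hpre : (fun x : ℝ => (x : Torus)) ⁻¹' V ∈ 𝓝 (0:ℝ) := by
    have := coe_continuous.continuousAt (x := (0:ℝ))
    rw [ContinuousAt, h0] at this
    exact this hV
  obtain ⟨ε, hε, hball⟩ := Metric.mem_nhds_iff.mp hpre
  obtain ⟨m, hm⟩ := exists_nat_gt (1/(4*ε))
  have hm0 : 0 < m := by
    by_contra h
    push_neg at h
    interval_cases m
    simp at hm
    have : (0:ℝ) < ε⁻¹ * 4⁻¹ := by positivity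
    linarith
  refine ⟨m, hm0, ?_⟩
  rintro _ ⟨x, hx, rfl⟩
  apply hball
  rw [Metric.mem_ball, Real.dist_eq, sub_zero]
  have hxle : |x| ≤ 1/(4*m) := abs_le.mpr (Set.mem_Icc.mp hx)
  have : 1/(4*(m:ℝ)) < ε := by
    rw [div_lt_iff₀ (by positivity)]
    rw [div_lt_iff₀ (by positivity)] at hm
    nlinarith
  linarith

lemma lam_mem_nhds : Lam ∈ 𝓝 (0 : Torus) := by
  have hopen : IsOpen ((fun x : ℝ => (x : Torus)) '' Set.Ioo (-(1/4)) (1/4)) :=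
    QuotientAddGroup.isOpenMap_coe _ isOpen_Ioo
  have h0 : (0 : Torus) ∈ (fun x : ℝ => (x : Torus)) '' Set.Ioo (-(1/4)) (1/4) :=
    ⟨0, by norm_num, by norm_num⟩
  exact mem_of_superset (hopen.mem_nhds h0)
    (Set.image_mono Set.Ioo_subset_Icc_self)

lemma lam_closed : IsClosed Lam :=
  (isCompact_Icc.image coe_continuous).isClosed

lemma zero_mem_interior_lam : (0 : Torus) ∈ interior Lam :=
  mem_interior_iff_mem_nhds.mpr lam_mem_nhds

/-- A nonzero element of the torus has a multiple outside `Λ₁`. -/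
lemma exists_nsmul_notin_lam {t : Torus} (ht : t ≠ 0) : ∃ n : ℕ, n • t ∉ Lam := by
  by_contra h
  push_neg at h
  obtain ⟨x, hx, rfl⟩ := mem_ball_of_nsmul_mem_lam (one_pos) (fun j _ _ => h j)
  apply ht
  -- x is in every small ball's preimage: for each m, get a representative; they agree with x
  have hx4 : |x| ≤ 1/4 := by
    have := Set.mem_Icc.mp hx
    rw [abs_le]
    constructor <;> [linarith [this.1]; linarith [this.2]]
  have : x = 0 := by
    by_contra hx0
    obtain ⟨m, hm0, hm⟩ : ∃ m : ℕ, 0 < m ∧ 1/(4*(m:ℝ)) < |x| := by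
      obtain ⟨m, hm⟩ := exists_nat_gt (1/(4*|x|))
      have hax : 0 < |x| := abs_pos.mpr hx0
      have hm0 : 0 < m := by
        by_contra hc
        push_neg at hc
        interval_cases m
        simp at hm
        have : (0:ℝ) < |x|⁻¹ * 4⁻¹ := by positivity
        linarith
      refine ⟨m, hm0, ?_⟩
      rw [div_lt_iff₀ (by positivity)]
      rw [div_lt_iff₀ (by positivity)] at hm
      nlinarith
    have hmem := mem_ball_of_nsmul_mem_lam hm0 (fun j _ _ => h j)
    obtain ⟨y, hy, hxy⟩ := hmem
    have hy4 : |y| ≤ 1/(4*m) := abs_le.mpr (Set.mem_Icc.mp hy)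
    have : y = x := eq_of_coe_eq_coe hxy (by
      calc |y - x| ≤ |y| + |x| := abs_sub y x
      _ ≤ 1/(4*m) + 1/4 := add_le_add hy4 hx4
      _ < 1 := by
        have : 1/(4*(m:ℝ)) ≤ 1/4 := by
          apply div_le_div_of_nonneg_left (by norm_num) (by norm_num)
          · have : (1:ℝ) ≤ m := by exact_mod_cast hm0
            linarith
        linarith)
    rw [this] at hy4
    linarith
  rw [this]
  norm_num

end DD

section DualGroup

open ContinuousAddMonoidHom

variable {A : Type*} [AddCommGroup A] [TopologicalSpace A] [IsTopologicalAddGroup A]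

namespace DD

lemma polar_isClosed (S : Set A) : IsClosed (polar S) := by
  have h : polar S = ⋂ s ∈ S, (fun χ : PDual A => χ s) ⁻¹' Lam := by
    ext χ; simp [polar]
  rw [h]
  exact isClosed_biInter fun s _ => lam_closed.preimage (continuous_eval_const s)

lemma nsmul_zero_mem {U : Set A} (hU : U ∈ 𝓝 (0:A)) (m : ℕ) :
    {a : A | ∀ j : ℕ, 1 ≤ j → j ≤ m → j • a ∈ U} ∈ 𝓝 (0:A) := by
  have h : {a : A | ∀ j : ℕ, 1 ≤ j → j ≤ m → j • a ∈ U} =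
      ⋂ j ∈ Finset.Icc 1 m, (fun a : A => j • a) ⁻¹' U := by
    ext a
    simp only [Set.mem_setOf_eq, Set.mem_iInter, Set.mem_preimage, Finset.mem_Icc]
    exact ⟨fun h j hj => h j hj.1 hj.2, fun h j h1 h2 => h j ⟨h1, h2⟩⟩
  rw [h]
  refine (Filter.biInter_finset_mem _).mpr fun j _ => ?_
  have hc : Continuous fun a : A => j • a := continuous_nsmul j
  exact hc.continuousAt.preimage_mem_nhds (by rw [smul_zero]; exact hU)

lemma raw_small {U : Set A} (hU : U ∈ 𝓝 (0:A)) {V : Set Torus} (hV : V ∈ 𝓝 (0:Torus)) :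
    ∃ W ∈ 𝓝 (0:A), ∀ f : A →+ Torus, (∀ s ∈ U, f s ∈ Lam) → ∀ a ∈ W, f a ∈ V := by
  obtain ⟨m, hm, hball⟩ := ball_small hV
  refine ⟨_, nsmul_zero_mem hU m, ?_⟩
  intro f hf a ha
  apply hball
  refine mem_ball_of_nsmul_mem_lam hm fun j hj1 hjm => ?_
  rw [← map_nsmul]
  exact hf _ (ha j hj1 hjm)

lemma polar_isCompact {U : Set A} (hU : U ∈ 𝓝 (0:A)) : IsCompact (polar U) := by
  haveI : Fact ((0:ℝ) < 1) := ⟨one_pos⟩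
  rw [(isInducing_toContinuousMap A Torus).isCompact_iff]
  set S : Set C(A, Torus) := toContinuousMap '' polar U with hS
  set C₀ : Set (A → Torus) := {f | (∀ x y, f (x+y) = f x + f y) ∧ ∀ s ∈ U, f s ∈ Lam} with hC₀
  have himg : ContinuousMap.toFun '' S = C₀ := by
    apply Set.Subset.antisymm
    · rintro _ ⟨_, ⟨χ, hχ, rfl⟩, rfl⟩
      exact ⟨fun x y => map_add χ x y, hχ⟩
    · rintro f ⟨hadd, hpol⟩
      set g : A →+ Torus := AddMonoidHom.mk' f hadd with hg
      have hct : ContinuousAt f 0 := by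
        intro V hV
        rw [show f 0 = 0 from map_zero g] at hV
        obtain ⟨W, hW, hsmall⟩ := raw_small hU hV
        rw [Filter.mem_map]
        exact Filter.mem_of_superset hW fun a ha => hsmall g hpol a ha
      have hcont : Continuous f := continuous_of_continuousAt_zero g hct
      exact ⟨(ContinuousAddMonoidHom.mk g hcont).toContinuousMap,
        ⟨ContinuousAddMonoidHom.mk g hcont, hpol, rfl⟩, rfl⟩
  have hC₀closed : IsClosed C₀ := by
    have h : C₀ = {f : A → Torus | ∀ x y, f (x+y) = f x + f y} ∩
        ⋂ s ∈ U, (fun f : A → Torus => f s) ⁻¹' Lam := by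
      ext f
      simp only [hC₀, Set.mem_setOf_eq, Set.mem_inter_iff, Set.mem_iInter, Set.mem_preimage]
    rw [h]
    refine IsClosed.inter ?_ (isClosed_biInter fun s _ => lam_closed.preimage (continuous_apply s))
    have h2 : {f : A → Torus | ∀ x y, f (x+y) = f x + f y} =
        ⋂ x, ⋂ y, {f : A → Torus | f (x+y) = f x + f y} := by ext; simp
    rw [h2]
    exact isClosed_iInter fun x => isClosed_iInter fun y =>
      isClosed_eq (continuous_apply (x+y)) ((continuous_apply x).add (continuous_apply y))
  have hC₀cpt : IsCompact C₀ := hC₀closed.isCompact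
  have heq : Equicontinuous ((↑) : S → A → Torus) := by
    intro x Vu hVu
    rw [uniformity_eq_comap_nhds_zero Torus] at hVu
    obtain ⟨B, hB, hBV⟩ := Filter.mem_comap.mp hVu
    obtain ⟨W, hW, hsmall⟩ := raw_small hU hB
    have hx : {y : A | y - x ∈ W} ∈ 𝓝 x := by
      have hc : Continuous fun y : A => y - x := continuous_id.sub continuous_const
      exact hc.continuousAt.preimage_mem_nhds (by rw [sub_self]; exact hW)
    refine Filter.eventually_of_mem hx fun y hy i => ?_
    obtain ⟨χ, hχ, hval⟩ := i.2
    apply hBV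
    have h1 : (i : A → Torus) x = χ x := by rw [← hval]; rfl
    have h2 : (i : A → Torus) y = χ y := by rw [← hval]; rfl
    show (i : A → Torus) y - (i : A → Torus) x ∈ B
    rw [h1, h2, ← map_sub]
    exact hsmall χ.toAddMonoidHom hχ _ hy
  exact ArzelaAscoli.isCompact_of_equicontinuous S (himg ▸ hC₀cpt) heq

lemma continuous_eval_on [T2Space A] {K : Set A} (hK : IsCompact K) :
    Continuous fun p : PDual A × ↥K => p.1 p.2.val := by
  haveI : CompactSpace ↥K := isCompact_iff_compactSpace.mp hK
  have h1 : Continuous fun χ : PDual A => (χ.toContinuousMap.restrict K) :=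
    (ContinuousMap.continuous_restrict K).comp (isInducing_toContinuousMap A Torus).continuous
  exact continuous_eval.comp (h1.prodMap continuous_id)

lemma compact_equicontinuous [TopologicalSpace.MetrizableSpace A] {Φ : Set (PDual A)}
    (hΦ : IsCompact Φ) {V : Set Torus} (hV : V ∈ 𝓝 (0:Torus)) :
    ∃ W ∈ 𝓝 (0:A), ∀ χ ∈ Φ, ∀ a ∈ W, χ a ∈ V := by
  by_contra hcon
  push_neg at hcon
  obtain ⟨Ub, hUb⟩ := (𝓝 (0:A)).exists_antitone_basis
  choose χs hχs as has hbad using fun n => hcon (Ub n) (hUb.mem n)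
  have htend : Filter.Tendsto as Filter.atTop (𝓝 (0:A)) := hUb.tendsto has
  set K := insert (0:A) (Set.range as) with hKdef
  have hK : IsCompact K := htend.isCompact_insert_range
  have hcont := continuous_eval_on (A := A) hK
  set u := (fun p : PDual A × ↥K => p.1 p.2.val) ⁻¹' (interior V) with hu
  have huo : IsOpen u := isOpen_interior.preimage hcont
  have h0K : (0:A) ∈ K := Set.mem_insert _ _
  have hsub : Φ ×ˢ {(⟨0, h0K⟩ : ↥K)} ⊆ u := by
    rintro ⟨χ, k⟩ ⟨hχ, hk⟩
    simp only [Set.mem_singleton_iff] at hk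
    subst hk
    show χ (0:A) ∈ interior V
    rw [map_zero]
    exact mem_interior_iff_mem_nhds.mpr hV
  obtain ⟨u', v', hou, hov, hΦu, hkv, huv⟩ :=
    generalized_tube_lemma hΦ isCompact_singleton huo hsub
  have hts : Filter.Tendsto (fun n => (⟨as n, Set.mem_insert_of_mem _ (Set.mem_range_self n)⟩ : ↥K))
      Filter.atTop (𝓝 (⟨0, h0K⟩ : ↥K)) := by
    rw [Topology.IsInducing.subtypeVal.tendsto_nhds_iff]
    exact htend
  have hevent : ∀ᶠ n in Filter.atTop,
      (⟨as n, Set.mem_insert_of_mem _ (Set.mem_range_self n)⟩ : ↥K) ∈ v' :=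
    hts.eventually_mem (hov.mem_nhds (hkv rfl))
  obtain ⟨n, hn⟩ := hevent.exists
  have hmem : (χs n, (⟨as n, Set.mem_insert_of_mem _ (Set.mem_range_self n)⟩ : ↥K)) ∈ u :=
    huv ⟨hΦu (hχs n), hn⟩
  exact hbad n (interior_subset hmem)

lemma mem_polar_basis (χ : PDual A) {Ub : ℕ → Set A} (hUb : (𝓝 (0:A)).HasAntitoneBasis Ub) :
    ∃ n, χ ∈ polar (Ub n) := by
  have hpre : (⇑χ) ⁻¹' Lam ∈ 𝓝 (0:A) := by
    have hc := (map_continuous χ).continuousAt (x := (0:A))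
    rw [ContinuousAt, map_zero] at hc
    exact hc lam_mem_nhds
  obtain ⟨n, -, hn⟩ := hUb.toHasBasis.mem_iff.mp hpre
  exact ⟨n, fun s hs => hn hs⟩

lemma compact_subset_polar [TopologicalSpace.MetrizableSpace A] {Ub : ℕ → Set A}
    (hUb : (𝓝 (0:A)).HasAntitoneBasis Ub) {Φ : Set (PDual A)} (hΦ : IsCompact Φ) :
    ∃ n, Φ ⊆ polar (Ub n) := by
  obtain ⟨W, hW, hsmall⟩ := compact_equicontinuous hΦ lam_mem_nhds
  obtain ⟨n, -, hn⟩ := hUb.toHasBasis.mem_iff.mp hW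
  exact ⟨n, fun χ hχ s hs => hsmall χ hχ s (hn hs)⟩

lemma finite_separating {C : Set (PDual A)} (hC : IsCompact C) {T : Set A}
    (h : ∀ χ ∈ C, ∃ a ∈ T, χ a ∉ Lam) :
    ∃ M : Set A, M ⊆ T ∧ M.Finite ∧ ∀ χ ∈ C, ∃ a ∈ M, χ a ∉ Lam := by
  have hcov : C ⊆ ⋃ a ∈ T, (fun χ : PDual A => χ a) ⁻¹' Lamᶜ := by
    intro χ hχ
    obtain ⟨a, haT, hna⟩ := h χ hχ
    exact Set.mem_biUnion haT hna
  obtain ⟨M, hMT, hMfin, hMcov⟩ := hC.elim_finite_subcover_image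
    (fun a _ => lam_closed.isOpen_compl.preimage (continuous_eval_const a)) hcov
  refine ⟨M, hMT, hMfin, fun χ hχ => ?_⟩
  obtain ⟨a, haM, ha⟩ := Set.mem_iUnion₂.mp (hMcov hχ)
  exact ⟨a, haM, ha⟩

lemma klemma0 {Ub : ℕ → Set A} (hUb : (𝓝 (0:A)).HasAntitoneBasis Ub)
    {F : Set (PDual A)} (hF : ∀ Q : Set (PDual A), IsCompact Q → IsClosed (F ∩ Q))
    (h0 : (0 : PDual A) ∉ F) :
    ∃ N ∈ 𝓝 (0 : PDual A), N ∩ F = ∅ := by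
  classical
  have hKc : ∀ n, IsCompact (polar (Ub n) ∩ F) := fun n =>
    (polar_isCompact (hUb.mem n)).of_isClosed_subset
      (Set.inter_comm F (polar (Ub n)) ▸ hF _ (polar_isCompact (hUb.mem n)))
      Set.inter_subset_left
  have hbase : ∃ S : Set A, S.Finite ∧ polar S ∩ (polar (Ub 0) ∩ F) = ∅ := by
    have hsep : ∀ χ ∈ polar (Ub 0) ∩ F, ∃ a ∈ (Set.univ : Set A), χ a ∉ Lam := by
      intro χ hχ
      have hχ0 : χ ≠ 0 := fun h => h0 (h ▸ hχ.2)
      have hex : ∃ a, χ a ≠ 0 := by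
        by_contra hc
        push_neg at hc
        exact hχ0 (DFunLike.ext _ _ fun a => by rw [hc a]; rfl)
      obtain ⟨a, ha⟩ := hex
      obtain ⟨k, hk⟩ := exists_nsmul_notin_lam ha
      exact ⟨k • a, Set.mem_univ _, by rwa [map_nsmul]⟩
    obtain ⟨M, -, hMfin, hM⟩ := finite_separating (hKc 0) hsep
    refine ⟨M, hMfin, Set.eq_empty_iff_forall_notMem.mpr ?_⟩
    rintro χ ⟨hpol, hC⟩
    obtain ⟨a, haM, hna⟩ := hM χ hC
    exact hna (hpol a haM)
  have hstep : ∀ (n : ℕ) (S : Set A), polar S ∩ (polar (Ub n) ∩ F) = ∅ →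
      ∃ M : Set A, M ⊆ Ub n ∧ M.Finite ∧ polar (S ∪ M) ∩ (polar (Ub (n+1)) ∩ F) = ∅ := by
    intro n S hS
    have hsep : ∀ χ ∈ polar (Ub (n+1)) ∩ F, ∃ a ∈ S ∪ Ub n, χ a ∉ Lam := by
      intro χ hχ
      by_cases hc : ∀ s ∈ Ub n, χ s ∈ Lam
      · have hmem : χ ∈ polar (Ub n) ∩ F := ⟨hc, hχ.2⟩
        have hnp : χ ∉ polar S := fun hp => by
          have h' : χ ∈ polar S ∩ (polar (Ub n) ∩ F) := ⟨hp, hmem⟩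
          rw [hS] at h'
          exact h'
        obtain ⟨a, haS, hna⟩ : ∃ a ∈ S, χ a ∉ Lam := by
          by_contra hcc
          push_neg at hcc
          exact hnp fun s hs => hcc s hs
        exact ⟨a, Set.mem_union_left _ haS, hna⟩
      · push_neg at hc
        obtain ⟨a, ha, hna⟩ := hc
        exact ⟨a, Set.mem_union_right _ ha, hna⟩
    obtain ⟨M₀, hM₀T, hM₀fin, hM₀⟩ := finite_separating (hKc (n+1)) hsep
    refine ⟨M₀ ∩ Ub n, Set.inter_subset_right, hM₀fin.inter_of_left _,
      Set.eq_empty_iff_forall_notMem.mpr ?_⟩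
    rintro χ ⟨hpol, hC⟩
    obtain ⟨a, haM₀, hna⟩ := hM₀ χ hC
    rcases hM₀T haM₀ with haS | haU
    · exact (hna (hpol a (Set.mem_union_left _ haS))).elim
    · exact (hna (hpol a (Set.mem_union_right _ ⟨haM₀, haU⟩))).elim
  choose! stepM hstep1 hstep2 hstep3 using hstep
  obtain ⟨S0, hS0fin, hS0⟩ := hbase
  let Sf : ∀ n : ℕ, {S : Set A // S.Finite ∧ polar S ∩ (polar (Ub n) ∩ F) = ∅} :=
    fun n => Nat.rec ⟨S0, hS0fin, hS0⟩
      (fun k p => ⟨p.1 ∪ stepM k p.1, p.2.1.union (hstep2 k p.1 p.2.2), hstep3 k p.1 p.2.2⟩) n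
  set S : ℕ → Set A := fun n => (Sf n).1 with hSdef
  have hSfin : ∀ n, (S n).Finite := fun n => (Sf n).2.1
  have hSempty : ∀ n, polar (S n) ∩ (polar (Ub n) ∩ F) = ∅ := fun n => (Sf n).2.2
  have hSsucc : ∀ n, S (n+1) = S n ∪ stepM n (S n) := fun n => rfl
  have hSmono : Monotone S := monotone_nat_of_le_succ fun n => by
    rw [hSsucc n]; exact Set.subset_union_left
  have hSsub : ∀ n, S (n+1) ⊆ S n ∪ Ub n := fun n => by
    rw [hSsucc n]
    exact Set.union_subset_union_right _ (hstep1 n (S n) (hSempty n))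
  set KA : Set A := insert 0 (⋃ n, S n) with hKA
  have hKAc : IsCompact KA := by
    refine isCompact_of_finite_subcover fun {ι} Us hUo hcov => ?_
    have h0m : (0:A) ∈ KA := Set.mem_insert _ _
    obtain ⟨i0, hi0⟩ := Set.mem_iUnion.mp (hcov h0m)
    have hUsn : Us i0 ∈ 𝓝 (0:A) := (hUo i0).mem_nhds hi0
    obtain ⟨n, -, hn⟩ := hUb.toHasBasis.mem_iff.mp hUsn
    have hclaim : ∀ m, S m ⊆ S (n+1) ∪ Ub n := by
      intro m
      induction m with
      | zero => exact (hSmono (Nat.zero_le (n+1))).trans Set.subset_union_left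
      | succ k ih =>
        rcases Nat.lt_or_ge k (n+1) with hk | hk
        · exact (hSmono (Nat.succ_le_of_lt hk)).trans Set.subset_union_left
        · refine (hSsub k).trans (Set.union_subset ih ?_)
          exact (hUb.antitone (by omega : n ≤ k)).trans Set.subset_union_right
    have hsubcov : S (n+1) ⊆ ⋃ i, Us i := fun x hx =>
      hcov (Set.mem_insert_of_mem _ (Set.mem_iUnion.mpr ⟨n+1, hx⟩))
    obtain ⟨t, ht⟩ := (hSfin (n+1)).isCompact.elim_finite_subcover Us hUo hsubcov
    refine ⟨insert i0 t, fun x hx => ?_⟩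
    rcases hx with rfl | hx
    · exact Set.mem_biUnion (Finset.mem_insert_self _ _) hi0
    · obtain ⟨m, hm⟩ := Set.mem_iUnion.mp hx
      rcases hclaim m hm with hxS | hxU
      · obtain ⟨i, hit, hiU⟩ := Set.mem_iUnion₂.mp (ht hxS)
        exact Set.mem_biUnion (Finset.mem_insert_of_mem hit) hiU
      · exact Set.mem_biUnion (Finset.mem_insert_self _ _) (hn hxU)
  set N : Set (PDual A) := ContinuousAddMonoidHom.toContinuousMap ⁻¹'
    {f : C(A,Torus) | Set.MapsTo (⇑f) KA (interior Lam)} with hN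
  have hNopen : IsOpen N := (ContinuousMap.isOpen_setOf_mapsTo hKAc isOpen_interior).preimage
    (isInducing_toContinuousMap A Torus).continuous
  have h0N : (0 : PDual A) ∈ N := fun a _ => by
    show ((0 : PDual A) a) ∈ interior Lam
    exact zero_mem_interior_lam
  refine ⟨N, hNopen.mem_nhds h0N, Set.eq_empty_iff_forall_notMem.mpr ?_⟩
  rintro χ ⟨hχN, hχF⟩
  obtain ⟨n, hpol⟩ := mem_polar_basis χ hUb
  have hnp : χ ∉ polar (S n) := fun hp => by
    have h' : χ ∈ polar (S n) ∩ (polar (Ub n) ∩ F) := ⟨hp, hpol, hχF⟩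
    rw [hSempty n] at h'
    exact h'
  obtain ⟨a, haS, hna⟩ : ∃ a ∈ S n, χ a ∉ Lam := by
    by_contra hcc
    push_neg at hcc
    exact hnp fun s hs => hcc s hs
  have haKA : a ∈ KA := Set.mem_insert_of_mem _ (Set.mem_iUnion.mpr ⟨n, haS⟩)
  exact hna (interior_subset (hχN haKA))

lemma restrictGen {Ub : ℕ → Set A} (hUb : (𝓝 (0:A)).HasAntitoneBasis Ub) :
    CompactlyCoherentSpace (PDual A) := by
  refine CompactlyCoherentSpace.of_isClosed fun t ht => ?_
  have htr : ∀ Q : Set (PDual A), IsCompact Q → IsClosed (t ∩ Q) := by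
    intro Q hQ
    haveI : CompactSpace ↥Q := isCompact_iff_compactSpace.mp hQ
    have h1 : IsClosed ((Subtype.val : ↥Q → PDual A) ⁻¹' t) := ht Q hQ
    have h3 : IsCompact (Subtype.val '' ((Subtype.val : ↥Q → PDual A) ⁻¹' t)) :=
      (h1.isCompact).image continuous_subtype_val
    have h4 : Subtype.val '' ((Subtype.val : ↥Q → PDual A) ⁻¹' t) = t ∩ Q := by
      rw [Subtype.image_preimage_coe, Set.inter_comm]
    rw [h4] at h3
    exact h3.isClosed
  rw [← isOpen_compl_iff, isOpen_iff_mem_nhds]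
  intro χ0 hχ0
  set F : Set (PDual A) := (fun χ : PDual A => χ + χ0) ⁻¹' t with hFdef
  have hF : ∀ Q : Set (PDual A), IsCompact Q → IsClosed (F ∩ Q) := by
    intro Q hQ
    have hcadd : Continuous fun χ : PDual A => χ + χ0 := continuous_id.add continuous_const
    have himg : IsCompact ((fun χ : PDual A => χ + χ0) '' Q) := hQ.image hcadd
    have h : F ∩ Q = (fun χ : PDual A => χ + χ0) ⁻¹' (t ∩ (fun χ : PDual A => χ + χ0) '' Q) := by
      ext χ
      simp only [hFdef, Set.mem_inter_iff, Set.mem_preimage]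
      constructor
      · rintro ⟨hχt, hχQ⟩
        exact ⟨hχt, ⟨χ, hχQ, rfl⟩⟩
      · rintro ⟨hχt, ψ, hψQ, heq⟩
        have : ψ = χ := by
          have h' := add_right_cancel heq
          exact h'
        exact ⟨hχt, this ▸ hψQ⟩
    rw [h]
    exact (htr _ himg).preimage hcadd
  have h0F : (0 : PDual A) ∉ F := by
    simp only [hFdef, Set.mem_preimage, zero_add]
    exact hχ0
  obtain ⟨N, hN, hNF⟩ := klemma0 hUb hF h0F
  have hmem : {ψ : PDual A | ψ - χ0 ∈ N} ∈ 𝓝 χ0 := by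
    have hc : Continuous fun ψ : PDual A => ψ - χ0 := continuous_id.sub continuous_const
    exact hc.continuousAt.preimage_mem_nhds (by rw [sub_self]; exact hN)
  refine Filter.mem_of_superset hmem fun ψ hψ hψt => ?_
  have h' : ψ - χ0 ∈ N ∩ F := ⟨hψ, show (ψ - χ0) + χ0 ∈ t by rwa [sub_add_cancel]⟩
  rw [hNF] at h'
  exact h'

lemma compact_equicontinuous_dual {Ub : ℕ → Set A}
    (hUb : (𝓝 (0:A)).HasAntitoneBasis Ub) {Ψ : Set (PDual (PDual A))} (hΨ : IsCompact Ψ)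
    {V : Set Torus} (hV : V ∈ 𝓝 (0:Torus)) :
    ∃ N ∈ 𝓝 (0 : PDual A), ∀ F ∈ Ψ, ∀ χ ∈ N, F χ ∈ V := by
  set Fs : Set (PDual A) := {χ | ∃ F ∈ Ψ, F χ ∉ interior V} with hFs
  have hFcl : ∀ Q : Set (PDual A), IsCompact Q → IsClosed (Fs ∩ Q) := by
    intro Q hQ
    haveI : CompactSpace ↥Q := isCompact_iff_compactSpace.mp hQ
    have he := continuous_eval_on (A := PDual A) hQ
    set D : Set (PDual (PDual A) × ↥Q) := (Ψ ×ˢ (Set.univ : Set ↥Q)) ∩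
      (fun p : PDual (PDual A) × ↥Q => p.1 p.2.val) ⁻¹' (interior V)ᶜ with hD
    have hDc : IsCompact D := (hΨ.prod isCompact_univ).inter_right
      (isOpen_interior.isClosed_compl.preimage he)
    have himg : (fun p : PDual (PDual A) × ↥Q => p.2.val) '' D = Fs ∩ Q := by
      ext χ
      constructor
      · rintro ⟨⟨G, q⟩, ⟨⟨hGΨ, -⟩, hpre⟩, rfl⟩
        exact ⟨⟨G, hGΨ, hpre⟩, q.2⟩
      · rintro ⟨⟨G, hGΨ, hGV⟩, hχQ⟩
        exact ⟨(G, ⟨χ, hχQ⟩), ⟨⟨hGΨ, Set.mem_univ _⟩, hGV⟩, rfl⟩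
    rw [← himg]
    exact (hDc.image (continuous_subtype_val.comp continuous_snd)).isClosed
  have h0F : (0 : PDual A) ∉ Fs := by
    rintro ⟨G, -, hGV⟩
    exact hGV (by rw [map_zero]; exact mem_interior_iff_mem_nhds.mpr hV)
  obtain ⟨N, hN, hNF⟩ := klemma0 hUb hFcl h0F
  refine ⟨N, hN, fun G hG χ hχ => ?_⟩
  by_contra hc
  have h' : χ ∈ N ∩ Fs := ⟨hχ, G, hG, fun hi => hc (interior_subset hi)⟩
  rw [hNF] at h'
  exact h'

lemma sub_apply (f g : PDual A) (a : A) : (f - g) a = f a - g a := by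
  rfl

lemma continuous_evalHom_of {G : Type*} [AddCommGroup G] [TopologicalSpace G]
    [IsTopologicalAddGroup G]
    (h : ∀ Φ : Set (PDual G), IsCompact Φ → ∀ V ∈ 𝓝 (0:Torus),
      ∃ W ∈ 𝓝 (0:G), ∀ χ ∈ Φ, ∀ a ∈ W, χ a ∈ V) :
    Continuous (evalHom : G → PDual (PDual G)) := by
  rw [(isInducing_toContinuousMap (PDual G) Torus).continuous_iff]
  rw [continuous_iff_continuousAt]
  intro a0
  rw [ContinuousAt, ContinuousMap.tendsto_iff_forall_isCompact_tendstoUniformlyOn]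
  intro Φ hΦ Vu hVu
  rw [uniformity_eq_comap_nhds_zero Torus] at hVu
  obtain ⟨B, hB, hBV⟩ := Filter.mem_comap.mp hVu
  obtain ⟨W, hW, hsmall⟩ := h Φ hΦ B hB
  have hmem : {a : G | a - a0 ∈ W} ∈ 𝓝 a0 := by
    have hc : Continuous fun a : G => a - a0 := continuous_id.sub continuous_const
    exact hc.continuousAt.preimage_mem_nhds (by rw [sub_self]; exact hW)
  refine Filter.eventually_of_mem hmem fun a ha χ hχ => ?_
  apply hBV
  show χ a - χ a0 ∈ B
  rw [← map_sub]
  exact hsmall χ hχ _ ha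

end DD

end DualGroup


open scoped Uniformity

variable {A : Type*} [AddCommGroup A] [TopologicalSpace A] [IsTopologicalAddGroup A]

/-- For a metrizable abelian topological group `A`, the double dual `Â̂` is complete and
metrizable, and both evaluation maps `α_A` and `α_{Â}` are continuous. -/
theorem double_dual_complete_metrizable [TopologicalSpace.MetrizableSpace A] :
    (@CompleteSpace (PDual (PDual A))
        (IsTopologicalAddGroup.rightUniformSpace (PDual (PDual A)))) ∧
    TopologicalSpace.MetrizableSpace (PDual (PDual A)) ∧
    Continuous (evalHom : A → PDual (PDual A)) ∧
    Continuous (evalHom : PDual A → PDual (PDual (PDual A))) := by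
  obtain ⟨Ub, hUb⟩ := (𝓝 (0:A)).exists_antitone_basis
  have hrg : CompactlyCoherentSpace (PDual A) := DD.restrictGen hUb
  haveI hCc : CompleteSpace C(PDual A, Torus) :=
    by haveI := hrg; infer_instance
  obtain ⟨Bb, hBb⟩ := (𝓝 (0:Torus)).exists_antitone_basis
  set Vent : ℕ → Set (Torus × Torus) :=
    fun m => (fun p : Torus × Torus => p.2 - p.1) ⁻¹' (Bb m) with hVent
  have hVb : (𝓤 Torus).HasBasis (fun _ : ℕ => True) Vent := by
    rw [uniformity_eq_comap_nhds_zero Torus]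
    exact hBb.toHasBasis.comap _
  set Kn : ℕ → Set (PDual A) := fun n => polar (Ub n) with hKn
  have hKnc : ∀ n, IsCompact (Kn n) := fun n => DD.polar_isCompact (hUb.mem n)
  set Ent : ℕ × ℕ → Set (C(PDual A, Torus) × C(PDual A, Torus)) :=
    fun q => {fg | ∀ χ ∈ Kn q.1, (fg.1 χ, fg.2 χ) ∈ Vent q.2} with hEnt
  have hEb : (𝓤 C(PDual A, Torus)).HasBasis (fun _ : ℕ × ℕ => True) Ent := by
    refine ContinuousMap.hasBasis_compactConvergenceUniformity.to_hasBasis ?_ ?_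
    · rintro ⟨Q, W⟩ ⟨hQ, hW⟩
      obtain ⟨n, hn⟩ := DD.compact_subset_polar hUb hQ
      obtain ⟨m, -, hm⟩ := hVb.mem_iff.mp hW
      exact ⟨(n, m), trivial, fun fg hfg χ hχ => hm (hfg χ (hn hχ))⟩
    · rintro ⟨n, m⟩ -
      exact ⟨(Kn n, Vent m), ⟨hKnc n, hVb.mem_of_mem trivial⟩, subset_rfl⟩
  haveI : (𝓤 C(PDual A, Torus)).IsCountablyGenerated := hEb.isCountablyGenerated
  haveI hMC : TopologicalSpace.MetrizableSpace C(PDual A, Torus) :=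
    UniformSpace.metrizableSpace
  have hmetr : TopologicalSpace.MetrizableSpace (PDual (PDual A)) :=
    (ContinuousAddMonoidHom.isEmbedding_toContinuousMap (PDual A) Torus).metrizableSpace
  -- neighborhood basis at 0 of the double dual
  have hn0 : (𝓝 (0 : PDual (PDual A))).HasBasis (fun _ : ℕ × ℕ => True)
      (fun q => {χ : PDual (PDual A) | ∀ φ ∈ Kn q.1, χ φ ∈ Bb q.2}) := by
    have e1 := (ContinuousAddMonoidHom.isInducing_toContinuousMap
      (PDual A) Torus).nhds_eq_comap (0 : PDual (PDual A))
    rw [e1, nhds_eq_comap_uniformity, Filter.comap_comap]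
    refine (hEb.comap _).to_hasBasis ?_ ?_
    · rintro q -
      refine ⟨q, trivial, fun χ hχ φ hφ => ?_⟩
      show χ φ - (0 : Torus) ∈ Bb q.2
      rw [sub_zero]
      exact hχ φ hφ
    · rintro q -
      refine ⟨q, trivial, fun χ hχ φ hφ => ?_⟩
      have h' : χ φ - (0 : Torus) ∈ Bb q.2 := hχ φ hφ
      rwa [sub_zero] at h'
  letI uG : UniformSpace (PDual (PDual A)) :=
    IsTopologicalAddGroup.rightUniformSpace (PDual (PDual A))
  haveI huag : @IsUniformAddGroup (PDual (PDual A)) uG _ := isUniformAddGroup_of_addCommGroup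
  have hui : @IsUniformInducing _ _ uG _
      (ContinuousAddMonoidHom.toContinuousMap : PDual (PDual A) → C(PDual A, Torus)) := by
    constructor
    have h1 : (Filter.comap (fun p : PDual (PDual A) × PDual (PDual A) =>
        (ContinuousAddMonoidHom.toContinuousMap p.1, ContinuousAddMonoidHom.toContinuousMap p.2))
        (𝓤 C(PDual A, Torus))).HasBasis (fun _ : ℕ × ℕ => True)
        (fun q => {p : PDual (PDual A) × PDual (PDual A) |
          ∀ φ ∈ Kn q.1, p.2 φ - p.1 φ ∈ Bb q.2}) := by
      refine (hEb.comap _).to_hasBasis ?_ ?_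
      · rintro q -
        exact ⟨q, trivial, fun p hp φ hφ => hp φ hφ⟩
      · rintro q -
        exact ⟨q, trivial, fun p hp φ hφ => hp φ hφ⟩
    have h2 : (𝓤 (PDual (PDual A))).HasBasis (fun _ : ℕ × ℕ => True)
        (fun q => {p : PDual (PDual A) × PDual (PDual A) |
          ∀ φ ∈ Kn q.1, p.2 φ - p.1 φ ∈ Bb q.2}) := by
      rw [uniformity_eq_comap_nhds_zero (PDual (PDual A))]
      refine (hn0.comap _).to_hasBasis ?_ ?_
      · rintro q -
        refine ⟨q, trivial, fun p hp φ hφ => ?_⟩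
        show (p.2 - p.1) φ ∈ Bb q.2
        rw [DD.sub_apply]
        exact hp φ hφ
      · rintro q -
        refine ⟨q, trivial, fun p hp φ hφ => ?_⟩
        have h' : (p.2 - p.1) φ ∈ Bb q.2 := hp φ hφ
        rwa [DD.sub_apply] at h'
    exact h1.eq_of_same_basis h2
  have hcomp : @CompleteSpace (PDual (PDual A)) uG := by
    rw [completeSpace_iff_isComplete_range hui]
    exact ((ContinuousAddMonoidHom.isClosedEmbedding_toContinuousMap
      (PDual A) Torus).isClosed_range).isComplete
  have hc3 : Continuous (evalHom : A → PDual (PDual A)) :=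
    DD.continuous_evalHom_of fun Φ hΦ V hV => DD.compact_equicontinuous hΦ hV
  have hc4 : Continuous (evalHom : PDual A → PDual (PDual (PDual A))) :=
    DD.continuous_evalHom_of fun Ψ hΨ V hV => DD.compact_equicontinuous_dual hUb hΨ hV
  exact ⟨hcomp, hmetr, hc3, hc4⟩


end
end

section
/- Let A be a metrizable abelian topological group and D ≤ A a dense subgroup. Then the restriction map Â → D̂ is an isomorphism of topological groups, where both duals carry the compact-open topology. -/
open scoped Topology

noncomputable section

namespace Aux
open Topology Filter Set

lemma continuous_coeT : Continuous (fun x : ℝ => (x : Torus)) := AddCircle.continuous_mk' 1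

lemma isClosed_Lam : IsClosed Lam := (isCompact_Icc.image continuous_coeT).isClosed

lemma lam_mem_nhds : Lam ∈ 𝓝 (0 : Torus) := by
  have ho : IsOpen ((fun x : ℝ => (x : Torus)) '' Set.Ioo (-(1/4)) (1/4)) :=
    QuotientAddGroup.isOpenMap_coe _ isOpen_Ioo
  refine mem_nhds_iff.2 ⟨_, ?_, ho, ⟨0, by norm_num, by norm_num⟩⟩
  exact image_mono Ioo_subset_Icc_self

lemma coeT_eq_iff {r s : ℝ} : (r : Torus) = (s : Torus) ↔ ∃ k : ℤ, r - s = k := by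
  rw [QuotientAddGroup.eq_iff_sub_mem]
  constructor
  · rintro h
    rcases AddSubgroup.mem_zmultiples_iff.1 h with ⟨k, hk⟩
    exact ⟨k, by simpa using hk.symm⟩
  · rintro ⟨k, hk⟩
    exact AddSubgroup.mem_zmultiples_iff.2 ⟨k, by simpa using hk.symm⟩

lemma abs_le_of_coe_mem {r c : ℝ} (hr : |r| ≤ 1/2) (hc : 0 ≤ c) (hc' : c ≤ 1/4)
    (h : (r : Torus) ∈ (fun x : ℝ => (x : Torus)) '' Set.Icc (-c) c) : |r| ≤ c := by
  rcases h with ⟨s, hs, hrs⟩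
  rcases coeT_eq_iff.1 hrs.symm with ⟨k, hk⟩
  have hs' : |s| ≤ c := abs_le.2 ⟨by linarith [hs.1], hs.2⟩
  have habs : |(k : ℝ)| < 1 := by
    rw [← hk]
    calc |r - s| ≤ |r| + |s| := abs_sub _ _
    _ < 1 := by
      have := abs_le.1 hr; have := abs_le.1 hs'; nlinarith [abs_nonneg r, abs_nonneg s]
  have hk0 : k = 0 := by
    have h1 : |k| < 1 := by exact_mod_cast habs
    exact Int.abs_lt_one_iff.mp h1
  subst hk0
  simp only [Int.cast_zero, sub_eq_zero] at hk
  rwa [hk]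

lemma mem_small_of_multiples {t : Torus} {m : ℕ} (hm : 1 ≤ m)
    (h : ∀ j : ℕ, 1 ≤ j → j ≤ m → j • t ∈ Lam) :
    t ∈ (fun x : ℝ => (x : Torus)) '' Set.Icc (-(1/(4*m))) (1/(4*m)) := by
  obtain ⟨r, hr, hrt⟩ : ∃ r ∈ Set.Ioc (-(1/2) : ℝ) (-(1/2) + 1), (r : Torus) = t := by
    let b := (AddCircle.equivIoc 1 (-(1/2)) : Torus ≃ _) t
    exact ⟨b.1, b.2, (AddCircle.equivIoc 1 (-(1/2))).symm_apply_apply t⟩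
  have hr2 : |r| ≤ 1/2 := abs_le.2 ⟨by linarith [hr.1], by linarith [hr.2]⟩
  have key : ∀ j : ℕ, 1 ≤ j → j ≤ m → |r| ≤ 1/(4*j) := by
    intro j h1 hjm
    induction j with
    | zero => omega
    | succ j ih =>
      have hcoe : ((j+1 : ℕ) • t) = (((j+1 : ℕ) * r : ℝ) : Torus) := by
        rw [← hrt, ← AddCircle.coe_nsmul]
        norm_num [nsmul_eq_mul]
      rcases Nat.eq_zero_or_pos j with hj0 | hj0
      · subst hj0
        have h1' := h 1 le_rfl (by omega)
        rw [one_smul, ← hrt] at h1'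
        have := abs_le_of_coe_mem (c := 1/4) hr2 (by norm_num) le_rfl h1'
        push_cast
        simpa using this
      · have ihj : |r| ≤ 1/(4*j) := ih (by omega) (by omega)
        have hj1 : (1:ℝ) ≤ j := by exact_mod_cast hj0
        have hjr : |((j:ℝ)+1) * r| ≤ 1/2 := by
          rw [abs_mul, abs_of_nonneg (by positivity : (0:ℝ) ≤ (j:ℝ)+1)]
          calc ((j:ℝ)+1) * |r| ≤ ((j:ℝ)+1) * (1/(4*j)) :=
                mul_le_mul_of_nonneg_left ihj (by positivity)
          _ ≤ 1/2 := by
                rw [mul_one_div, div_le_div_iff₀ (by positivity) (by norm_num)]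
                nlinarith
        have hmem := h (j+1) (by omega) hjm
        rw [hcoe] at hmem
        have habs : |((j:ℝ)+1) * r| ≤ 1/4 := by
          refine abs_le_of_coe_mem (c := 1/4) hjr (by norm_num) le_rfl ?_
          rw [show ((j:ℝ)+1) * r = ((j+1 : ℕ) : ℝ) * r by push_cast; ring]
          exact hmem
        rw [abs_mul, abs_of_nonneg (by positivity : (0:ℝ) ≤ (j:ℝ)+1)] at habs
        rw [le_div_iff₀ (by positivity)]
        push_cast
        linarith
  have hfin := key m hm le_rfl
  have h4m : (0:ℝ) < 4*m := by positivity
  exact ⟨r, abs_le.1 hfin |>.imp (fun h => by linarith) id, hrt⟩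

lemma sum_halves_le (n : ℕ) : (∑ j ∈ Finset.Icc 1 n, ((1:ℝ)/2)^j) ≤ 1 := by
  have : ∀ n : ℕ, (∑ j ∈ Finset.Icc 1 n, ((1:ℝ)/2)^j) = 1 - (1/2)^n := by
    intro n
    induction n with
    | zero => simp
    | succ n ih =>
      rw [Finset.sum_Icc_succ_top (by omega), ih]
      ring
  rw [this]
  have : (0:ℝ) ≤ (1/2)^n := by positivity
  linarith

lemma sum_mem_Lam {n : ℕ} (s : ℕ → ℝ) (hs : ∀ j, 1 ≤ j → j ≤ n → |s j| ≤ 1/4 * (1/2)^j) :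
    ((∑ j ∈ Finset.Icc 1 n, s j : ℝ) : Torus) ∈ Lam := by
  refine ⟨∑ j ∈ Finset.Icc 1 n, s j, ?_, rfl⟩
  have h1 : |∑ j ∈ Finset.Icc 1 n, s j| ≤ ∑ j ∈ Finset.Icc 1 n, (1/4 * (1/2:ℝ)^j) := by
    refine (Finset.abs_sum_le_sum_abs _ _).trans (Finset.sum_le_sum ?_)
    intro j hj
    rw [Finset.mem_Icc] at hj
    exact hs j hj.1 hj.2
  have h2 : (∑ j ∈ Finset.Icc 1 n, (1/4 * (1/2:ℝ)^j)) ≤ 1/4 := by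
    rw [← Finset.mul_sum]
    nlinarith [sum_halves_le n]
  rw [abs_le] at h1
  exact ⟨by linarith, by linarith⟩

lemma isCompact_insert_iUnion {A : Type*} [TopologicalSpace A] (z : A) (T : ℕ → Set A)
    (hfin : ∀ n, (T n).Finite) (hsmall : ∀ V ∈ 𝓝 z, ∀ᶠ n in atTop, T n ⊆ V) :
    IsCompact (insert z (⋃ n, T n)) := by
  rw [isCompact_iff_ultrafilter_le_nhds]
  intro f hf
  rw [le_principal_iff] at hf
  by_cases hcase : ∀ N : ℕ, (⋃ n, ⋃ (_ : N ≤ n), T n) ∈ f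
  · refine ⟨z, mem_insert _ _, fun V hV => ?_⟩
    obtain ⟨N, hN⟩ := eventually_atTop.1 (hsmall V hV)
    exact mem_of_superset (hcase N) (iUnion₂_subset fun n hn => hN n hn)
  · push_neg at hcase
    obtain ⟨N, hN⟩ := hcase
    have hcompl : (⋃ n, ⋃ (_ : N ≤ n), T n)ᶜ ∈ f := (Ultrafilter.compl_mem_iff_notMem).2 hN
    have hsub : insert z (⋃ n, T n) ∩ (⋃ n, ⋃ (_ : N ≤ n), T n)ᶜ ⊆
        insert z (⋃ n ∈ Finset.range N, T n) := by
      rintro y ⟨hy1, hy2⟩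
      rcases hy1 with rfl | hy1
      · exact mem_insert _ _
      · rcases mem_iUnion.1 hy1 with ⟨n, hn⟩
        refine Or.inr (mem_iUnion₂.2 ⟨n, ?_, hn⟩)
        rw [Finset.mem_range]
        by_contra hcon
        exact hy2 (mem_iUnion₂.2 ⟨n, by omega, hn⟩)
    have hSf : insert z (⋃ n ∈ Finset.range N, T n) ∈ f :=
      mem_of_superset (inter_mem hf hcompl) hsub
    have hSfin : (insert z (⋃ n ∈ Finset.range N, T n)).Finite :=
      (Set.Finite.biUnion (Finset.range N).finite_toSet fun n _ => hfin n).insert z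
    obtain ⟨y, hy, hfy⟩ := Ultrafilter.eq_pure_of_finite_mem hSfin hSf
    refine ⟨y, ?_, by rw [hfy]; exact pure_le_nhds y⟩
    have : insert z (⋃ n ∈ Finset.range N, T n) ⊆ insert z (⋃ n, T n) :=
      insert_subset_insert (iUnion₂_subset fun n _ => subset_iUnion T n)
    exact this hy


variable {A : Type*} [AddCommGroup A] [TopologicalSpace A] [IsTopologicalAddGroup A]

/-- The key combinatorial lemma: for a dense subgroup `D` of a first-countable abelian
topological group `A` and a compact `K ⊆ A`, there is a compact `L ⊆ D` such that any
character of `A` mapping `L` into `Λ₁` also maps `K` into `Λ₁`. -/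
lemma key [FirstCountableTopology A] (D : AddSubgroup A) (hD : Dense (D : Set A))
    {K : Set A} (hK : IsCompact K) :
    ∃ L : Set ↥D, IsCompact L ∧
      ∀ χ : PDual A, (∀ d ∈ L, χ ↑d ∈ Lam) → ∀ x ∈ K, χ x ∈ Lam := by
  classical
  obtain ⟨U, hU⟩ := (𝓝 (0 : A)).exists_antitone_basis
  -- the symmetric neighborhoods W n
  have hWex : ∀ n : ℕ, ∃ Wn : Set A, IsOpen Wn ∧ (0:A) ∈ Wn ∧ (∀ x ∈ Wn, -x ∈ Wn) ∧
      ∀ j : ℕ, j ≤ 2^(n+2) → ∀ x ∈ closure Wn, j • x ∈ U n := by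
    intro n
    have hV : (⋂ j ∈ Finset.range (2^(n+2)+1), (fun x : A => j • x) ⁻¹' U n) ∈ 𝓝 (0:A) := by
      refine (Filter.biInter_finset_mem _).2 fun j _ => ?_
      refine (continuous_nsmul j).continuousAt.preimage_mem_nhds ?_
      simpa using hU.1.mem_of_mem (i := n) trivial
    obtain ⟨C, ⟨hCmem, hCclosed⟩, hCsub⟩ := (closed_nhds_basis (0:A)).mem_iff.1 hV
    refine ⟨interior C ∩ (fun x => -x) ⁻¹' interior C, ?_, ?_, ?_, ?_⟩
    · exact isOpen_interior.inter (isOpen_interior.preimage continuous_neg)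
    · simpa using mem_interior_iff_mem_nhds.2 hCmem
    · rintro x ⟨h1, h2⟩; exact ⟨h2, by simpa using h1⟩
    · intro j hj x hx
      have hxC : x ∈ C := by
        have : closure (interior C ∩ (fun x => -x) ⁻¹' interior C) ⊆ closure C :=
          closure_mono (fun y hy => interior_subset hy.1)
        exact hCclosed.closure_subset (this hx)
      have := hCsub hxC
      simp only [Finset.mem_range, mem_iInter] at this
      exact this j (by omega)
  choose W hWo hW0 hWs hWU using hWex
  -- the covering step
  have hcover : ∀ (n : ℕ) (C : Set A), IsCompact C → ∃ Fn : Finset A,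
      (∀ d ∈ Fn, d ∈ D ∧ ∃ x ∈ C, x - d ∈ W n) ∧ ∀ x ∈ C, ∃ d ∈ Fn, x - d ∈ W n := by
    intro n C hC
    have hcov : C ⊆ ⋃ i : {d : A // d ∈ D ∧ ∃ x ∈ C, x - d ∈ W n},
        (fun y => y - i.1) ⁻¹' W n := by
      intro x hx
      have hO : IsOpen ((fun y => x - y) ⁻¹' W n) := (hWo n).preimage (continuous_const.sub continuous_id)
      have hOne : ((fun y => x - y) ⁻¹' W n).Nonempty := ⟨x, by simpa using hW0 n⟩
      obtain ⟨d, hdD, hdO⟩ := hD.exists_mem_open hO hOne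
      exact mem_iUnion.2 ⟨⟨d, hdD, x, hx, hdO⟩, hdO⟩
    obtain ⟨t, ht⟩ := hC.elim_finite_subcover _
      (fun i => (hWo n).preimage (continuous_id.sub continuous_const)) hcov
    refine ⟨t.image Subtype.val, fun d hd => ?_, fun x hx => ?_⟩
    · rcases Finset.mem_image.1 hd with ⟨i, _, rfl⟩; exact i.2
    · rcases mem_iUnion₂.1 (ht hx) with ⟨i, hit, hxi⟩
      exact ⟨i.1, Finset.mem_image_of_mem _ hit, hxi⟩
  choose F hF1 hF2 using hcover
  -- the recursive sequence of compacta and finite sets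
  let shrink : ∀ (n : ℕ) (C : Set A), IsCompact C → Set A := fun n C hC =>
    ⋃ d ∈ F n C hC, ((fun x => x - d) '' C) ∩ closure (W n)
  have hshrink : ∀ n C hC, IsCompact (shrink n C hC) := fun n C hC =>
    (F n C hC).isCompact_biUnion fun d _ =>
      ((hC.image (continuous_id.sub continuous_const)).inter_right isClosed_closure)
  let seq : ℕ → {C : Set A // IsCompact C} := fun n =>
    Nat.rec ⟨K, hK⟩ (fun n p => ⟨shrink (n+1) p.1 p.2, hshrink _ _ _⟩) n
  let KS : ℕ → Set A := fun n => (seq n).1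
  let FS : ℕ → Finset A := fun n => Nat.casesOn n ∅ (fun n => F (n+1) (seq n).1 (seq n).2)
  have hKSsucc : ∀ n, KS (n+1) = shrink (n+1) (KS n) (seq n).2 := fun n => rfl
  have hKS0 : KS 0 = K := rfl
  have hKS_sub : ∀ n, KS (n+1) ⊆ closure (W (n+1)) := by
    intro n x hx
    rw [hKSsucc] at hx
    rcases mem_iUnion₂.1 hx with ⟨d, hd, hxd⟩
    exact hxd.2
  have hstep : ∀ n, ∀ x ∈ KS n, ∃ d ∈ FS (n+1), x - d ∈ KS (n+1) := by
    intro n x hx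
    obtain ⟨d, hd, hxd⟩ := hF2 (n+1) (KS n) (seq n).2 x hx
    refine ⟨d, hd, ?_⟩
    rw [hKSsucc]
    exact mem_iUnion₂.2 ⟨d, hd, ⟨⟨x, hx, rfl⟩, subset_closure hxd⟩⟩
  have hFS_D : ∀ n, ∀ d ∈ FS (n+1), d ∈ D := fun n d hd =>
    (hF1 (n+1) (KS n) (seq n).2 d hd).1
  have hFS_loc : ∀ n, ∀ d ∈ FS (n+1), ∃ x ∈ KS n, x - d ∈ W (n+1) := fun n d hd =>
    (hF1 (n+1) (KS n) (seq n).2 d hd).2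
  -- the compact set of multiples
  let T : ℕ → Set A := fun n => ⋃ d ∈ FS n, (fun j : ℕ => j • d) '' {j | j ≤ 2^n}
  have hTfin : ∀ n, (T n).Finite := fun n =>
    Set.Finite.biUnion (FS n).finite_toSet fun d _ => (Set.finite_Iic (2^n)).image _
  have hTsmall : ∀ V ∈ 𝓝 (0:A), ∀ᶠ n in atTop, T n ⊆ V := by
    intro V hV
    obtain ⟨V', hV', hVV⟩ := exists_nhds_zero_half hV
    obtain ⟨m, -, hm⟩ := hU.1.mem_iff.1 hV'
    filter_upwards [eventually_ge_atTop (m+2)] with n hn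
    rintro y hy
    rcases mem_iUnion₂.1 hy with ⟨d, hd, j, hj, rfl⟩
    simp only [mem_setOf_eq] at hj
    obtain ⟨p, rfl⟩ : ∃ p, n = p + 2 := ⟨n - 2, by omega⟩
    obtain ⟨x, hxK, hxd⟩ := hFS_loc (p+1) d hd
    have hx_cl : x ∈ closure (W (p+1)) := hKS_sub p hxK
    have hxd' : -(x - d) ∈ closure (W (p+2)) :=
      subset_closure (hWs (p+2) _ hxd)
    have h1 : j • x ∈ U (p+1) := hWU (p+1) j (by calc j ≤ 2^(p+2) := hj
      _ ≤ 2^(p+1+2) := Nat.pow_le_pow_right (by norm_num) (by omega)) x hx_cl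
    have h2 : j • (-(x - d)) ∈ U (p+2) := hWU (p+2) j
      (le_trans hj (Nat.pow_le_pow_right (by norm_num) (by omega))) _ hxd'
    have hdecomp : j • d = j • x + j • (-(x-d)) := by
      rw [← smul_add]; congr 1; abel
    show j • d ∈ V
    rw [hdecomp]
    exact hVV _ (hm (hU.2 (by omega) h1)) _ (hm (hU.2 (by omega) h2))
  let LA : Set A := insert 0 (⋃ n, T n)
  have hLA : IsCompact LA := isCompact_insert_iUnion 0 T hTfin hTsmall
  have hLAD : LA ⊆ (D : Set A) := by
    rintro y (rfl | hy)
    · exact D.zero_mem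
    · rcases mem_iUnion.1 hy with ⟨n, hn⟩
      rcases mem_iUnion₂.1 hn with ⟨d, hd, j, hj, rfl⟩
      rcases n with _ | n
      · exact absurd (show d ∈ (∅ : Finset A) from hd) (Finset.notMem_empty d)
      · exact D.nsmul_mem (hFS_D n d hd) j
  refine ⟨Subtype.val ⁻¹' LA, ?_, ?_⟩
  · rw [IsEmbedding.subtypeVal.isCompact_iff]
    rwa [Set.image_preimage_eq_of_subset (by rw [Subtype.range_val]; exact hLAD)]
  intro χ hχ x hx
  -- the chain of remainders
  have hχLA : ∀ y ∈ LA, χ y ∈ Lam := by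
    intro y hy
    exact hχ ⟨y, hLAD hy⟩ hy
  let c : ℕ → A × A := fun n => Nat.rec (x, 0)
    (fun n p => if h : p.1 ∈ KS n then
      (p.1 - (hstep n p.1 h).choose, (hstep n p.1 h).choose) else p) n
  have hmem : ∀ n, (c n).1 ∈ KS n := by
    intro n
    induction n with
    | zero => exact hx
    | succ n ih =>
      show (if h : (c n).1 ∈ KS n then
        ((c n).1 - (hstep n (c n).1 h).choose, (hstep n (c n).1 h).choose) else c n).1 ∈ _
      rw [dif_pos ih]
      exact (hstep n (c n).1 ih).choose_spec.2
  have hrel : ∀ n, (c (n+1)).1 = (c n).1 - (c (n+1)).2 ∧ (c (n+1)).2 ∈ FS (n+1) := by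
    intro n
    have : c (n+1) = ((c n).1 - (hstep n (c n).1 (hmem n)).choose,
        (hstep n (c n).1 (hmem n)).choose) := by
      show (if h : (c n).1 ∈ KS n then _ else c n) = _
      rw [dif_pos (hmem n)]
    rw [this]
    exact ⟨rfl, (hstep n (c n).1 (hmem n)).choose_spec.1⟩
  -- partial sums
  have hsum : ∀ n, x - (c n).1 = ∑ j ∈ Finset.Icc 1 n, (c j).2 := by
    intro n
    induction n with
    | zero => rw [show (c 0).1 = x from rfl]; simp
    | succ n ih =>
      rw [Finset.sum_Icc_succ_top (by omega), ← ih, (hrel n).1]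
      abel
  have htend0 : Tendsto (fun n => (c n).1) atTop (𝓝 0) := by
    rw [hU.1.tendsto_right_iff]
    intro m _
    filter_upwards [eventually_ge_atTop (m+1)] with n hn
    obtain ⟨p, rfl⟩ : ∃ p, n = p + 1 := ⟨n - 1, by omega⟩
    have : (c (p+1)).1 ∈ closure (W (p+1)) := hKS_sub p (hmem (p+1))
    have := hWU (p+1) 1 Nat.one_le_two_pow _ this
    rw [one_smul] at this
    exact hU.2 (by omega) this
  have htend : Tendsto (fun n => x - (c n).1) atTop (𝓝 x) := by
    have := tendsto_const_nhds.sub htend0 (f := fun _ : ℕ => x)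
    simpa using this
  -- the values of χ on the d's are small
  have hd_small : ∀ j : ℕ, 1 ≤ j → ∃ r : ℝ, |r| ≤ 1/4 * (1/2)^j ∧ (r : Torus) = χ ((c j).2) := by
    intro j hj
    obtain ⟨p, rfl⟩ : ∃ p, j = p + 1 := ⟨j - 1, by omega⟩
    have hdF : (c (p+1)).2 ∈ FS (p+1) := (hrel p).2
    have hmul : ∀ i : ℕ, 1 ≤ i → i ≤ 2^(p+1) → i • χ ((c (p+1)).2) ∈ Lam := by
      intro i h1 h2
      rw [← map_nsmul]
      refine hχLA _ (Or.inr (mem_iUnion.2 ⟨p+1, mem_iUnion₂.2 ⟨_, hdF, ⟨i, h2, rfl⟩⟩⟩))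
    have := mem_small_of_multiples (m := 2^(p+1)) (Nat.one_le_two_pow) hmul
    rcases this with ⟨r, hr, hrr⟩
    refine ⟨r, ?_, hrr⟩
    have hb : |r| ≤ 1 / (4 * ((2^(p+1) : ℕ) : ℝ)) := abs_le.2 ⟨by linarith [hr.1], hr.2⟩
    calc |r| ≤ 1 / (4 * ((2^(p+1) : ℕ) : ℝ)) := hb
    _ = 1/4 * (1/2)^(p+1) := by
        push_cast
        rw [div_pow, one_pow, div_mul_div_comm, one_mul]
  -- conclude: χ of partial sums lies in Lam, pass to the limit
  let r : ℕ → ℝ := fun j => if h : 1 ≤ j then (hd_small j h).choose else 0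
  have hrbound : ∀ j, 1 ≤ j → |r j| ≤ 1/4 * (1/2)^j := by
    intro j hj
    simp only [r, dif_pos hj]
    exact (hd_small j hj).choose_spec.1
  have hrval : ∀ j, 1 ≤ j → ((r j : ℝ) : Torus) = χ ((c j).2) := by
    intro j hj
    simp only [r, dif_pos hj]
    exact (hd_small j hj).choose_spec.2
  have hχs : ∀ n, χ (x - (c n).1) ∈ Lam := by
    intro n
    rw [hsum n, map_sum]
    have hsc : ∑ j ∈ Finset.Icc 1 n, χ ((c j).2)
        = ((∑ j ∈ Finset.Icc 1 n, r j : ℝ) : Torus) := by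
      have hms : ((∑ j ∈ Finset.Icc 1 n, r j : ℝ) : Torus)
          = ∑ j ∈ Finset.Icc 1 n, ((r j : ℝ) : Torus) :=
        map_sum (QuotientAddGroup.mk' (AddSubgroup.zmultiples (1:ℝ))) _ _
      rw [hms]
      refine Finset.sum_congr rfl fun j hj => ?_
      rw [Finset.mem_Icc] at hj
      exact (hrval j hj.1).symm
    rw [hsc]
    exact sum_mem_Lam r fun j h1 _ => hrbound j h1
  exact isClosed_Lam.mem_of_tendsto ((χ.continuous.tendsto x).comp htend)
    (Filter.Eventually.of_forall hχs)

end Aux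

open Topology Filter Set Aux

variable {A : Type*} [AddCommGroup A] [TopologicalSpace A] [IsTopologicalAddGroup A]

/-- For a metrizable abelian topological group `A` and a dense subgroup `D ≤ A`, the
restriction map `Â → D̂` is an isomorphism of topological groups. -/
theorem restriction_topIso_of_dense_metrizable [TopologicalSpace.MetrizableSpace A]
    (D : AddSubgroup A) (hD : Dense (D : Set A)) :
    Function.Bijective
      (fun χ : PDual A => χ.comp
        ({ D.subtype with continuous_toFun := continuous_subtype_val } :
          ContinuousAddMonoidHom D A)) ∧
    Continuous
      (fun χ : PDual A => χ.comp
        ({ D.subtype with continuous_toFun := continuous_subtype_val } :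
          ContinuousAddMonoidHom D A)) ∧
    IsOpenMap
      (fun χ : PDual A => χ.comp
        ({ D.subtype with continuous_toFun := continuous_subtype_val } :
          ContinuousAddMonoidHom D A)) := by
  classical
  set ι : ContinuousAddMonoidHom ↥D A :=
    ({ D.subtype with continuous_toFun := continuous_subtype_val } :
      ContinuousAddMonoidHom ↥D A) with hι
  set res : PDual A → PDual ↥D := fun χ => χ.comp ι with hres
  have hres_apply : ∀ (χ : PDual A) (d : ↥D), res χ d = χ ↑d := fun χ d => rfl
  -- injectivity
  have hinj : Function.Injective res := by
    intro χ₁ χ₂ h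
    have heq : (⇑χ₁ : A → Torus) = ⇑χ₂ := by
      refine Continuous.ext_on hD χ₁.continuous χ₂.continuous ?_
      intro a ha
      have := congrArg (fun ψ : PDual ↥D => ψ ⟨a, ha⟩) h
      exact this
    ext a
    rw [heq]
  -- surjectivity
  have hsurj : Function.Surjective res := by
    intro ψ
    letI uA : UniformSpace A := IsTopologicalAddGroup.rightUniformSpace A
    haveI : IsUniformAddGroup A := isUniformAddGroup_of_addCommGroup
    letI uT : UniformSpace Torus := IsTopologicalAddGroup.rightUniformSpace Torus
    haveI : IsUniformAddGroup Torus := isUniformAddGroup_of_addCommGroup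
    haveI : CompleteSpace Torus := complete_of_compact
    have hui : IsUniformInducing ((↑) : ↥D → A) := isUniformEmbedding_subtype_val.isUniformInducing
    have hdr : DenseRange ((↑) : ↥D → A) := by
      rw [DenseRange, Subtype.range_val]; exact hD
    have hdi : IsDenseInducing ((↑) : ↥D → A) := hui.isDenseInducing hdr
    have hψu : UniformContinuous ⇑ψ :=
      uniformContinuous_of_continuousAt_zero ψ ψ.continuous.continuousAt
    set g : A → Torus := hdi.extend ⇑ψ with hg
    have hgc : Continuous g := (uniformContinuous_uniformly_extend hui hdr hψu).continuous
    have hg_eq : ∀ d : ↥D, g ↑d = ψ d := fun d => hdi.extend_eq ψ.continuous d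
    have hadd : ∀ x y : A, g (x + y) = g x + g y := by
      have hDD : Dense ((D : Set A) ×ˢ (D : Set A)) := hD.prod hD
      have h1 : Continuous fun p : A × A => g (p.1 + p.2) := hgc.comp continuous_add
      have h2 : Continuous fun p : A × A => g p.1 + g p.2 :=
        (hgc.comp continuous_fst).add (hgc.comp continuous_snd)
      have heq := Continuous.ext_on hDD h1 h2 ?_
      · exact fun x y => congrFun heq (x, y)
      · rintro ⟨a, b⟩ ⟨ha, hb⟩
        have hab : a + b ∈ D := D.add_mem ha hb
        have e1 : g (a + b) = ψ ⟨a + b, hab⟩ := hg_eq ⟨a + b, hab⟩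
        have e2 : g a = ψ ⟨a, ha⟩ := hg_eq ⟨a, ha⟩
        have e3 : g b = ψ ⟨b, hb⟩ := hg_eq ⟨b, hb⟩
        show g (a + b) = g a + g b
        rw [e1, e2, e3, ← map_add]
        congr 1
    have h0 : g 0 = 0 := by
      have := hg_eq 0
      simpa using this
    refine ⟨⟨⟨⟨g, h0⟩, hadd⟩, hgc⟩, ?_⟩
    ext d
    exact hg_eq d
  -- continuity
  have hcont : Continuous res := ContinuousAddMonoidHom.continuous_comp_left ι
  -- openness
  have hopen : IsOpenMap res := by
    choose E hE using hsurj
    have hER : ∀ χ, E (res χ) = χ := fun χ => hinj (hE (res χ))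
    have hres0 : res 0 = 0 := by ext d; rfl
    have hE0 : E 0 = 0 := by
      apply hinj; rw [hE, hres0]
    have hEcont : Continuous E := by
      have hresadd : ∀ χ₁ χ₂ : PDual A, res (χ₁ + χ₂) = res χ₁ + res χ₂ := by
        intro χ₁ χ₂; ext d; rfl
      have hEadd : ∀ ψ φ : PDual ↥D, E (ψ + φ) = E ψ + E φ := by
        intro ψ φ
        apply hinj
        rw [hE, hresadd, hE, hE]
      let EHom : PDual ↥D →+ PDual A := ⟨⟨E, hE0⟩, hEadd⟩
      have : Continuous ⇑EHom := by
        apply continuous_of_continuousAt_zero EHom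
        rw [ContinuousAt, map_zero]
        rw [(ContinuousAddMonoidHom.isInducing_toContinuousMap A Torus).tendsto_nhds_iff]
        rw [ContinuousMap.tendsto_nhds_compactOpen]
        intro K hK U hU h0U
        rcases K.eq_empty_or_nonempty with rfl | ⟨x0, hx0⟩
        · filter_upwards with ψ
          exact Set.mapsTo_empty _ _
        have h0U' : (0 : Torus) ∈ U := by
          have := h0U hx0
          simpa using this
        -- find m with image of Icc (-(1/(4m))) (1/(4m)) ⊆ U
        obtain ⟨m, hm1, hmU⟩ : ∃ m : ℕ, 1 ≤ m ∧
            (fun x : ℝ => (x : Torus)) '' Set.Icc (-(1/(4*m))) (1/(4*m)) ⊆ U := by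
          have hpre : IsOpen ((fun x : ℝ => (x : Torus)) ⁻¹' U) :=
            hU.preimage (AddCircle.continuous_mk' 1)
          have h0pre : (0:ℝ) ∈ (fun x : ℝ => (x : Torus)) ⁻¹' U := by
            simpa using h0U'
          obtain ⟨ε, hε, hball⟩ := Metric.isOpen_iff.1 hpre 0 h0pre
          obtain ⟨m, hm⟩ := exists_nat_gt (1/ε)
          refine ⟨m + 1, by omega, ?_⟩
          rintro t ⟨s, hs, rfl⟩
          push_cast at hs
          apply hball
          rw [Metric.mem_ball, Real.dist_eq, sub_zero]
          have h4m : (0:ℝ) < 4*(m+1) := by positivity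
          have hsb : |s| ≤ 1/(4*((m:ℝ)+1)) := abs_le.2 ⟨by linarith [hs.1], hs.2⟩
          have hmε : 1/(4*((m:ℝ)+1)) < ε := by
            rw [div_lt_iff₀ h4m]
            have hε' : 0 < ε := hε
            have : 1/ε < (m:ℝ)+1 := by linarith
            rw [div_lt_iff₀ hε'] at this
            nlinarith
          calc |s| ≤ 1/(4*((m:ℝ)+1)) := hsb
          _ < ε := hmε
          -- cast fix below if needed
        -- the compact set of multiples of K
        have hK' : IsCompact (⋃ j ∈ Finset.Icc 1 m, (fun x : A => j • x) '' K) :=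
          (Finset.Icc 1 m).isCompact_biUnion fun j _ => hK.image (continuous_nsmul j)
        obtain ⟨L, hL, hLkey⟩ := key D hD hK'
        -- the open neighborhood in PDual D
        have hLam_open : ∃ Uo : Set Torus, IsOpen Uo ∧ (0:Torus) ∈ Uo ∧ Uo ⊆ Lam := by
          rcases mem_nhds_iff.1 lam_mem_nhds with ⟨Uo, hUo1, hUo2, hUo3⟩
          exact ⟨Uo, hUo2, hUo3, hUo1⟩
        obtain ⟨Uo, hUo_open, hUo0, hUoLam⟩ := hLam_open
        have hnhd : {ψ : PDual ↥D | Set.MapsTo ⇑ψ L Uo} ∈ 𝓝 (0 : PDual ↥D) := by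
          have hopen' : IsOpen {f : C(↥D, Torus) | Set.MapsTo ⇑f L Uo} :=
            ContinuousMap.isOpen_setOf_mapsTo hL hUo_open
          have : {ψ : PDual ↥D | Set.MapsTo ⇑ψ L Uo} =
              ContinuousAddMonoidHom.toContinuousMap ⁻¹' {f : C(↥D, Torus) | Set.MapsTo ⇑f L Uo} := rfl
          rw [this]
          refine (ContinuousAddMonoidHom.isInducing_toContinuousMap ↥D Torus).continuous.continuousAt.preimage_mem_nhds ?_
          exact hopen'.mem_nhds (by intro d hd; exact hUo0)
        filter_upwards [hnhd] with ψ hψ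
        intro x hx
        have hEψK' : ∀ y ∈ ⋃ j ∈ Finset.Icc 1 m, (fun x : A => j • x) '' K, E ψ y ∈ Lam := by
          refine hLkey (E ψ) ?_
          intro d hd
          have : E ψ ↑d = ψ d := by
            have := congrArg (fun φ : PDual ↥D => φ d) (hE ψ)
            exact this
          rw [this]
          exact hUoLam (hψ hd)
        have hmul : ∀ j : ℕ, 1 ≤ j → j ≤ m → j • (E ψ x) ∈ Lam := by
          intro j h1 h2
          rw [← map_nsmul]
          exact hEψK' _ (mem_iUnion₂.2 ⟨j, Finset.mem_Icc.2 ⟨h1, h2⟩, ⟨x, hx, rfl⟩⟩)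
        exact hmU (mem_small_of_multiples hm1 hmul)
      exact this
    exact (Homeomorph.mk ⟨res, E, hER, hE⟩ hcont hEcont).isOpenMap
  exact ⟨⟨hinj, hsurj⟩, hcont, hopen⟩

end
end

section
/- Let A be an abelian topological group and U ≤ A an open subgroup. Then U is dually embedded in A: every continuous character χ : U → T extends to a continuous character of A. Moreover, the restriction map Â → Û is an open surjection. -/
open scoped Topology

noncomputable section

variable {A : Type*} [AddCommGroup A] [TopologicalSpace A] [IsTopologicalAddGroup A]


set_option linter.unusedSectionVars false

namespace DualExt

/-- The coercion `ℝ → Torus` as a group hom. -/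
def mkT : ℝ →+ Torus := QuotientAddGroup.mk' (AddSubgroup.zmultiples (1:ℝ))

lemma mkT_eq (x : ℝ) : mkT x = (x : Torus) := rfl

/-- Scaled version of `Lam`. -/
def Lamd (δ : ℝ) : Set Torus := (fun x : ℝ => (x : Torus)) '' Set.Icc (-δ) δ

lemma zero_mem_Lamd {δ : ℝ} (hδ : 0 ≤ δ) : (0 : Torus) ∈ Lamd δ :=
  ⟨0, ⟨by linarith, hδ⟩, by show ((0:ℝ) : Torus) = 0; rw [← mkT_eq, map_zero]⟩

lemma Lamd_mono {δ₁ δ₂ : ℝ} (h : δ₁ ≤ δ₂) : Lamd δ₁ ⊆ Lamd δ₂ :=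
  Set.image_mono (Set.Icc_subset_Icc (by linarith) h)

lemma add_mem_Lamd {δ₁ δ₂ : ℝ} {s t : Torus} (hs : s ∈ Lamd δ₁) (ht : t ∈ Lamd δ₂) :
    s + t ∈ Lamd (δ₁ + δ₂) := by
  obtain ⟨x, hx, rfl⟩ := hs; obtain ⟨y, hy, rfl⟩ := ht
  refine ⟨x + y, ⟨by linarith [hx.1, hy.1], add_le_add hx.2 hy.2⟩, ?_⟩
  show ((x + y : ℝ) : Torus) = ((x : ℝ) : Torus) + ((y : ℝ) : Torus)
  rw [← mkT_eq, map_add, mkT_eq, mkT_eq]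

lemma zsmul_mem_Lamd {δ : ℝ} {t : Torus} (n : ℤ) (h : t ∈ Lamd δ) :
    n • t ∈ Lamd (|(n : ℝ)| * δ) := by
  obtain ⟨x, hx, rfl⟩ := h
  refine ⟨(n : ℝ) * x, abs_le.1 ?_, ?_⟩
  · rw [abs_mul]
    exact mul_le_mul le_rfl (abs_le.2 hx) (abs_nonneg x) (abs_nonneg _)
  · show (((n : ℝ) * x : ℝ) : Torus) = n • ((x : ℝ) : Torus)
    rw [← mkT_eq, ← mkT_eq, ← map_zsmul, zsmul_eq_mul]

lemma norm_le_of_mem_Lamd {δ : ℝ} {t : Torus} (h : t ∈ Lamd δ) : ‖t‖ ≤ δ := by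
  obtain ⟨x, hx, rfl⟩ := h
  calc ‖(x : Torus)‖ ≤ ‖x‖ := QuotientAddGroup.norm_mk_le_norm
    _ = |x| := Real.norm_eq_abs x
    _ ≤ δ := abs_le.2 hx

lemma ball_subset_Lamd {δ : ℝ} : Metric.ball (0 : Torus) δ ⊆ Lamd δ := by
  intro t ht
  obtain ⟨y, rfl⟩ := QuotientAddGroup.mk_surjective t
  have hnorm : ‖(y : Torus)‖ = |y - round y| := by
    simpa using AddCircle.norm_eq (p := (1:ℝ)) (x := y)
  have hlt : ‖(y : Torus)‖ < δ := by
    simpa [dist_eq_norm] using ht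
  refine ⟨y - round y, abs_le.1 (by rw [← hnorm]; exact hlt.le), ?_⟩
  have h0 : ((round y : ℝ) : Torus) = 0 := by
    rw [AddCircle.coe_eq_zero_iff]
    exact ⟨round y, by simp⟩
  show mkT (y - round y) = (y : Torus)
  rw [map_sub, mkT_eq, mkT_eq, h0, sub_zero]

lemma exists_Lamd_subset_of_nhds {V : Set Torus} (hV : V ∈ 𝓝 (0 : Torus)) :
    ∃ ε : ℝ, 0 < ε ∧ Lamd ε ⊆ V := by
  obtain ⟨ε, hε, hb⟩ := Metric.mem_nhds_iff.1 hV
  refine ⟨ε / 2, by linarith, fun t ht => hb ?_⟩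
  have := norm_le_of_mem_Lamd ht
  simp only [Metric.mem_ball, dist_eq_norm, sub_zero]
  calc ‖t‖ ≤ ε / 2 := this
    _ < ε := by linarith


/-- Descend along a hom and extend by injectivity of the circle. -/
lemma exists_extension {G : Type*} [AddCommGroup G] (e : G →+ A) (ρ : G →+ Torus)
    (h : ∀ g, e g = 0 → ρ g = 0) : ∃ χ : A →+ Torus, ∀ g, χ (e g) = ρ g := by
  let lift : (G ⧸ e.ker) →+ Torus :=
    QuotientAddGroup.lift e.ker ρ (fun g hg => h g hg)
  obtain ⟨χ, hχ⟩ := (Module.Baer.of_divisible Torus).extension_property_addMonoidHom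
      (QuotientAddGroup.kerLift e) (QuotientAddGroup.kerLift_injective e) lift
  refine ⟨χ, fun g => ?_⟩
  have h1 : χ (QuotientAddGroup.kerLift e (QuotientAddGroup.mk g)) =
      lift (QuotientAddGroup.mk g) := DFunLike.congr_fun hχ _
  exact h1

/-- A hom agreeing with a continuous character on an open subgroup is continuous. -/
lemma continuous_of_eqOn (U : AddSubgroup A) (hU : IsOpen (U : Set A))
    (ψ : PDual U) (χ : A →+ Torus) (h : ∀ u : U, χ u = ψ u) : Continuous χ := by
  apply continuous_of_continuousAt_zero χ
  have hmap : Filter.map (Subtype.val : U → A) (𝓝 (0 : U)) = 𝓝 (0 : A) :=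
    hU.isOpenEmbedding_subtypeVal.map_nhds_eq (0 : U)
  rw [ContinuousAt, ← hmap, Filter.tendsto_map'_iff]
  have hfun : (χ ∘ (Subtype.val : U → A)) = ψ := funext fun u => h u
  rw [hfun, map_zero]
  have : (0 : Torus) = ψ 0 := (map_zero ψ).symm
  rw [this]
  exact ψ.continuous.tendsto 0


/-- One-step controlled extension. -/
lemma step (W : AddSubgroup A) (hW : IsOpen (W : Set A)) (a : A)
    (K : Set A) (hK : IsCompact K) (hKW : K ⊆ ↑(W ⊔ AddSubgroup.zmultiples a))
    {ε : ℝ} (hε : 0 < ε) :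
    ∃ (K' : Set A) (δ : ℝ), K' ⊆ (W : Set A) ∧ IsCompact K' ∧ 0 < δ ∧
      ∀ ψ : ↥W →+ Torus, (∀ x (hx : x ∈ W), x ∈ K' → ψ ⟨x, hx⟩ ∈ Lamd δ) →
        ∃ χ : A →+ Torus, (∀ x (hx : x ∈ W), χ x = ψ ⟨x, hx⟩) ∧
          ∀ x ∈ K, χ x ∈ Lamd ε := by
  classical
  -- the order of `a` modulo `W`
  set q : ℕ := addOrderOf ((a : A ⧸ W)) with hq
  have hdvd : ∀ n : ℤ, n • a ∈ W ↔ (q : ℤ) ∣ n := by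
    intro n
    rw [← QuotientAddGroup.eq_zero_iff (N := W) (n • a), QuotientAddGroup.mk_zsmul,
      hq, addOrderOf_dvd_iff_zsmul_eq_zero]
  -- cover `K` by cosets of `W`
  set V : ℤ → Set A := fun n => (fun x => x - n • a) ⁻¹' (W : Set A) with hV
  have hVopen : ∀ n, IsOpen (V n) := fun n =>
    hW.preimage (continuous_id.sub continuous_const)
  have hcover : K ⊆ ⋃ n : ℤ, V n := by
    intro x hx
    obtain ⟨w, hw, z, hz, hwz⟩ := AddSubgroup.mem_sup.1 (hKW hx)
    obtain ⟨n, rfl⟩ := AddSubgroup.mem_zmultiples_iff.1 hz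
    refine Set.mem_iUnion.2 ⟨n, ?_⟩
    show x - n • a ∈ W
    rw [← hwz]; simpa using hw
  obtain ⟨t, ht⟩ := hK.elim_finite_subcover V hVopen hcover
  -- the bound
  set M : ℕ := t.sup Int.natAbs with hM
  have habs : ∀ n ∈ t, |(n : ℝ)| ≤ (M : ℝ) := by
    intro n hn
    have h1 : ((n.natAbs : ℕ) : ℝ) ≤ ((M : ℕ) : ℝ) := by
      exact_mod_cast Finset.le_sup hn
    rwa [Nat.cast_natAbs, Int.cast_abs] at h1
  set δ : ℝ := ε / (2 * ((M : ℝ) + 1)) with hδdef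
  have hM1 : (0:ℝ) < (M : ℝ) + 1 := by positivity
  have hδ : 0 < δ := by positivity
  have hqa : (q : ℤ) • a ∈ W := (hdvd _).2 dvd_rfl
  set K' : Set A :=
    (⋃ n ∈ t, ((fun x => x - n • a) '' K) ∩ (W : Set A)) ∪ {(q : ℤ) • a} with hK'
  have hK'W : K' ⊆ (W : Set A) := by
    apply Set.union_subset
    · exact Set.iUnion₂_subset fun n _ => Set.inter_subset_right
    · simpa using hqa
  have hK'c : IsCompact K' := by
    apply IsCompact.union
    · apply t.finite_toSet.isCompact_biUnion
      intro n _
      exact ((hK.image (continuous_id.sub continuous_const)).inter_right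
        (AddSubgroup.isClosed_of_isOpen W hW))
    · exact isCompact_singleton
  refine ⟨K', δ, hK'W, hK'c, hδ, fun ψ hψ => ?_⟩
  -- choose the value at `a`
  have hqaK' : (q : ℤ) • a ∈ K' := Set.mem_union_right _ rfl
  obtain ⟨r, hr, hre⟩ := hψ _ hqa hqaK'
  set tval : Torus := if q = 0 then 0 else mkT (r / q) with htval
  have hqtval : q ≠ 0 → (q : ℤ) • tval = ψ ⟨(q : ℤ) • a, hqa⟩ := by
    intro h0
    rw [htval, if_neg h0, ← map_zsmul, zsmul_eq_mul]
    have : ((q:ℤ):ℝ) * (r / q) = r := by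
      field_simp
      push_cast; ring
    rw [this, mkT_eq]
    exact hre
  have hcompat : ∀ (n : ℤ) (h : n • a ∈ W), ψ ⟨n • a, h⟩ = n • tval := by
    intro n h
    obtain ⟨m, rfl⟩ := (hdvd n).1 h
    by_cases h0 : q = 0
    · have hz : ((q:ℤ) * m) = 0 := by rw [h0]; simp
      have hz2 : (⟨((q:ℤ) * m) • a, h⟩ : ↥W) = 0 := by
        ext; simp [hz]
      rw [hz2, map_zero, hz, zero_smul]
    · have hmul : ((q:ℤ) * m) • a = m • ((q:ℤ) • a) := by
        rw [mul_comm, mul_zsmul]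
      have key : (⟨((q:ℤ) * m) • a, h⟩ : ↥W) = m • (⟨(q : ℤ) • a, hqa⟩ : ↥W) := by
        ext; simp [hmul]
      rw [key, map_zsmul, ← hqtval h0, smul_smul, mul_comm]
  have htval_small : ∀ n ∈ t, n • tval ∈ Lamd ((M : ℝ) * δ) := by
    intro n hn
    by_cases h0 : q = 0
    · rw [htval, if_pos h0, smul_zero]
      exact zero_mem_Lamd (by positivity)
    · have hq1 : (1:ℝ) ≤ (q:ℝ) := by
        exact_mod_cast Nat.one_le_iff_ne_zero.2 h0
      have hqpos : (0:ℝ) < (q:ℝ) := by linarith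
      have htv : tval ∈ Lamd (δ / q) := by
        rw [htval, if_neg h0, mkT_eq]
        refine ⟨r / q, ?_, rfl⟩
        rw [Set.mem_Icc] at hr ⊢
        refine ⟨?_, (div_le_div_iff_of_pos_right hqpos).2 hr.2⟩
        rw [← neg_div]
        exact (div_le_div_iff_of_pos_right hqpos).2 hr.1
      have h2 := zsmul_mem_Lamd n htv
      refine Lamd_mono ?_ h2
      calc |(n:ℝ)| * (δ / q) ≤ (M:ℝ) * (δ / q) :=
            mul_le_mul_of_nonneg_right (habs n hn) (by positivity)
        _ ≤ (M:ℝ) * δ :=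
            mul_le_mul_of_nonneg_left (div_le_self hδ.le hq1) (Nat.cast_nonneg M)
  -- build the extension
  set e : (↥W × ℤ) →+ A :=
    (W.subtype.comp (AddMonoidHom.fst ↥W ℤ)) +
      ((zmultiplesHom A a).comp (AddMonoidHom.snd ↥W ℤ)) with he
  set ρ : (↥W × ℤ) →+ Torus :=
    (ψ.comp (AddMonoidHom.fst ↥W ℤ)) +
      ((zmultiplesHom Torus tval).comp (AddMonoidHom.snd ↥W ℤ)) with hρ
  have he_apply : ∀ (w : ↥W) (n : ℤ), e (w, n) = (w : A) + n • a := fun w n => rfl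
  have hρ_apply : ∀ (w : ↥W) (n : ℤ), ρ (w, n) = ψ w + n • tval := fun w n => rfl
  have hker : ∀ g : ↥W × ℤ, e g = 0 → ρ g = 0 := by
    rintro ⟨w, n⟩ hg
    rw [he_apply] at hg
    have hna : n • a ∈ W := by
      rw [eq_neg_of_add_eq_zero_right hg]
      exact neg_mem w.2
    have hw : w = -(⟨n • a, hna⟩ : ↥W) := by
      ext
      simpa using eq_neg_of_add_eq_zero_left hg
    rw [hρ_apply, hw, map_neg, hcompat n hna, neg_add_cancel]
  obtain ⟨χ, hχ⟩ := exists_extension e ρ hker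
  refine ⟨χ, ?_, ?_⟩
  · intro x hx
    have := hχ (⟨x, hx⟩, 0)
    rwa [he_apply, hρ_apply, zero_smul, zero_smul, add_zero, add_zero] at this
  · intro x hx
    obtain ⟨n, hn, hxn⟩ := Set.mem_iUnion₂.1 (ht hx)
    have hwx : x - n • a ∈ W := hxn
    have hwK' : x - n • a ∈ K' := by
      apply Set.mem_union_left
      exact Set.mem_biUnion hn ⟨⟨x, hx, rfl⟩, hxn⟩
    have hx_eq : x = ((⟨x - n • a, hwx⟩ : ↥W) : A) + n • a := by simp
    have := hχ (⟨x - n • a, hwx⟩, n)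
    rw [he_apply, hρ_apply] at this
    rw [hx_eq, this]
    have hsum := add_mem_Lamd (hψ _ hwx hwK') (htval_small n hn)
    refine Lamd_mono ?_ hsum
    have hδε : δ * (2 * ((M:ℝ) + 1)) = ε := by
      rw [hδdef]; field_simp
    nlinarith [hδ.le, (by positivity : (0:ℝ) ≤ (M:ℝ))]


lemma key (S : Finset A) : ∀ (W : AddSubgroup A), IsOpen (W : Set A) →
    ∀ (K : Set A), IsCompact K → K ⊆ ↑(W ⊔ AddSubgroup.closure (S : Set A)) →
    ∀ ε : ℝ, 0 < ε →
    ∃ (K' : Set A) (δ : ℝ), K' ⊆ (W : Set A) ∧ IsCompact K' ∧ 0 < δ ∧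
      ∀ ψ : ↥W →+ Torus, (∀ x (hx : x ∈ W), x ∈ K' → ψ ⟨x, hx⟩ ∈ Lamd δ) →
        ∃ χ : A →+ Torus, (∀ x (hx : x ∈ W), χ x = ψ ⟨x, hx⟩) ∧
          ∀ x ∈ K, χ x ∈ Lamd ε := by
  classical
  induction S using Finset.induction_on with
  | empty =>
    intro W hW K hK hKW ε hε
    apply step W hW 0 K hK ?_ hε
    have : K ⊆ (W : Set A) := by
      simpa [AddSubgroup.closure_empty] using hKW
    intro x hx
    exact AddSubgroup.mem_sup_left (this hx)
  | @insert a S' ha IH =>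
    intro W hW K hK hKW ε hε
    set W' := W ⊔ AddSubgroup.zmultiples a with hW'def
    have hW' : IsOpen (W' : Set A) := AddSubgroup.isOpen_mono le_sup_left hW
    have hKW' : K ⊆ ↑(W' ⊔ AddSubgroup.closure (S' : Set A)) := by
      rwa [Finset.coe_insert, ← Set.singleton_union, AddSubgroup.closure_union,
        ← AddSubgroup.zmultiples_eq_closure, ← sup_assoc] at hKW
    obtain ⟨K₁, δ₁, hK₁W', hK₁c, hδ₁, H₁⟩ := IH W' hW' K hK hKW' ε hε
    have hK₁sub : K₁ ⊆ ↑(W ⊔ AddSubgroup.zmultiples a) := hK₁W'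
    obtain ⟨K', δ, hK'W, hK'c, hδ, H⟩ := step W hW a K₁ hK₁c hK₁sub hδ₁
    refine ⟨K', δ, hK'W, hK'c, hδ, fun ψ hψ => ?_⟩
    obtain ⟨χ₀, hext₀, hctrl₀⟩ := H ψ hψ
    set ψ' : ↥W' →+ Torus := χ₀.comp W'.subtype with hψ'def
    have hψ' : ∀ x (hx : x ∈ W'), x ∈ K₁ → ψ' ⟨x, hx⟩ ∈ Lamd δ₁ := by
      intro x hx hxK
      exact hctrl₀ x hxK
    obtain ⟨χ, hext, hctrl⟩ := H₁ ψ' hψ'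
    refine ⟨χ, fun x hx => ?_, hctrl⟩
    have hx' : x ∈ W' := AddSubgroup.mem_sup_left hx
    rw [hext x hx']
    exact hext₀ x hx


end DualExt

open DualExt

/-- An open subgroup `U ≤ A` is dually embedded: every continuous character of `U`
extends to a continuous character of `A`; moreover the restriction map `Â → Û` is an
open surjection. -/
theorem restriction_surjective_isOpenMap_of_open_subgroup (U : AddSubgroup A)
    (hU : IsOpen (U : Set A)) :
    Function.Surjective
      (fun χ : PDual A => χ.comp
        ({ U.subtype with continuous_toFun := continuous_subtype_val } :
          ContinuousAddMonoidHom U A)) ∧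
    IsOpenMap
      (fun χ : PDual A => χ.comp
        ({ U.subtype with continuous_toFun := continuous_subtype_val } :
          ContinuousAddMonoidHom U A)) := by
  classical
  set ι : ContinuousAddMonoidHom U A :=
    ({ U.subtype with continuous_toFun := continuous_subtype_val }) with hι
  set res : PDual A → PDual ↥U := fun χ => χ.comp ι with hres
  have hres_apply : ∀ (χ : PDual A) (u : ↥U), res χ u = χ u := fun χ u => rfl
  have hsurj : Function.Surjective res := by
    intro ψ
    obtain ⟨χ₀, hχ₀⟩ := (Module.Baer.of_divisible Torus).extension_property_addMonoidHom
        U.subtype Subtype.coe_injective ψ.toAddMonoidHom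
    have hagree : ∀ u : ↥U, χ₀ u = ψ u := fun u => DFunLike.congr_fun hχ₀ u
    have hcont := continuous_of_eqOn U hU ψ χ₀ hagree
    exact ⟨⟨χ₀, hcont⟩, ContinuousAddMonoidHom.ext fun u => hagree u⟩
  refine ⟨hsurj, ?_⟩
  intro O hO
  rw [isOpen_iff_mem_nhds]
  rintro _ ⟨χ, hχO, rfl⟩
  have hN : (fun ν : PDual A => χ + ν) ⁻¹' O ∈ 𝓝 (0 : PDual A) := by
    apply (continuous_const.add continuous_id).continuousAt.preimage_mem_nhds
    simpa using hO.mem_nhds hχO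
  set N := (fun ν : PDual A => χ + ν) ⁻¹' O with hNdef
  obtain ⟨K, ε, hKc, hε, hbasic⟩ :
      ∃ (K : Set A) (ε : ℝ), IsCompact K ∧ 0 < ε ∧
        {ν : PDual A | ∀ x ∈ K, ν x ∈ Lamd ε} ⊆ N := by
    rw [(ContinuousAddMonoidHom.isInducing_toContinuousMap A Torus).nhds_eq_comap] at hN
    obtain ⟨N', hN', hsub⟩ := Filter.mem_comap.1 hN
    obtain ⟨V, hV, hball⟩ := UniformSpace.mem_nhds_iff.1 hN'
    obtain ⟨K, V', hKc, hV', hVsub⟩ :=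
      (ContinuousMap.mem_compactConvergence_entourage_iff V).1 hV
    obtain ⟨ε, hε, hεsub⟩ := Metric.mem_uniformity_dist.1 hV'
    refine ⟨K, ε/2, hKc, by linarith, ?_⟩
    intro ν hν
    apply hsub
    show ν.toContinuousMap ∈ N'
    apply hball
    apply hVsub
    intro x hx
    apply hεsub
    show dist ((0 : PDual A).toContinuousMap x) (ν.toContinuousMap x) < ε
    have h0 : (0 : PDual A).toContinuousMap x = 0 := rfl
    rw [h0, dist_zero_left]
    calc ‖ν x‖ ≤ ε/2 := norm_le_of_mem_Lamd (hν x hx)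
      _ < ε := by linarith
  obtain ⟨S, hS⟩ := hKc.elim_finite_subcover (fun y : A => (fun z => z - y) ⁻¹' (U : Set A))
    (fun y => hU.preimage (continuous_id.sub continuous_const))
    (fun x hx => Set.mem_iUnion.2 ⟨x, by simp [U.zero_mem]⟩)
  have hKsub : K ⊆ ↑(U ⊔ AddSubgroup.closure (S : Set A)) := by
    intro x hx
    obtain ⟨y, hy, hxy⟩ := Set.mem_iUnion₂.1 (hS hx)
    have h1 : x - y ∈ U := hxy
    have h2 : y ∈ AddSubgroup.closure (S : Set A) := AddSubgroup.subset_closure hy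
    have h3 : x = (x - y) + y := by abel
    rw [h3]
    exact add_mem (AddSubgroup.mem_sup_left h1) (AddSubgroup.mem_sup_right h2)
  obtain ⟨K', δ, hK'U, hK'c, hδ, H⟩ := key S U hU K hKc hKsub ε hε
  set K'u : Set ↥U := (Subtype.val : ↥U → A) ⁻¹' K' with hK'u
  have hK'uc : IsCompact K'u :=
    (AddSubgroup.isClosed_of_isOpen U hU).isClosedEmbedding_subtypeVal.isCompact_preimage hK'c
  set NU : Set (PDual ↥U) := {ψ | Set.MapsTo ψ K'u (Metric.ball (0:Torus) δ)} with hNU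
  have hNUopen : IsOpen NU := by
    have h1 : IsOpen {f : C(↥U, Torus) | Set.MapsTo f K'u (Metric.ball (0:Torus) δ)} :=
      ContinuousMap.isOpen_setOf_mapsTo hK'uc Metric.isOpen_ball
    exact h1.preimage (ContinuousAddMonoidHom.isInducing_toContinuousMap ↥U Torus).continuous
  have h0NU : (0 : PDual ↥U) ∈ NU := fun x _ => by
    have hz : (0 : PDual ↥U) x = 0 := rfl
    simp only [Metric.mem_ball, hz, dist_self]
    exact hδ
  have hNUsub : NU ⊆ res '' N := by
    intro ψ hψ
    have hsmall : ∀ x (hx : x ∈ U), x ∈ K' → ψ.toAddMonoidHom ⟨x, hx⟩ ∈ Lamd δ := by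
      intro x hx hxK
      exact ball_subset_Lamd (hψ (show (⟨x, hx⟩ : ↥U) ∈ K'u from hxK))
    obtain ⟨χ₀, hext, hctrl⟩ := H ψ.toAddMonoidHom hsmall
    have hagree : ∀ u : ↥U, χ₀ u = ψ u := fun u => hext u u.2
    have hcont := continuous_of_eqOn U hU ψ χ₀ hagree
    refine ⟨⟨χ₀, hcont⟩, hbasic fun x hx => hctrl x hx, ?_⟩
    exact ContinuousAddMonoidHom.ext fun u => hagree u
  have hresN : res '' N ∈ 𝓝 (0 : PDual ↥U) :=
    Filter.mem_of_superset (hNUopen.mem_nhds h0NU) hNUsub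
  have hmap : Filter.map (fun ψ => res χ + ψ) (𝓝 (0 : PDual ↥U)) = 𝓝 (res χ) := by
    simpa using map_add_left_nhds_zero (res χ)
  have hmem : (fun ψ => res χ + ψ) '' (res '' N) ∈ 𝓝 (res χ) := by
    rw [← hmap]; exact Filter.image_mem_map hresN
  apply Filter.mem_of_superset hmem
  rintro _ ⟨_, ⟨ν, hν, rfl⟩, rfl⟩
  exact ⟨χ + ν, hν, ContinuousAddMonoidHom.ext fun u => rfl⟩


end
end
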